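/- arXiv:hep-th/9306139 — 5 statements merged into one kernel-verified Lean document; each statement's English description precedes it below -/
import Mathlib

section
/- Let n ≥ 1 and consider the polynomial ring ℝ[x_{ab} : 1 ≤ a ≤ b ≤ n]. For 1 ≤ i ≤ n let E_i be the derivation E_i = −∂/∂x_{ii} − Σ_{j=i+1}^{n} x_{i+1,j} ∂/∂x_{ij}. Then the iterated Lie bracket of derivations [⋯[[E_1, E_2], E_3], ⋯, E_n] equals the derivation −∂/∂x_{1n}. (For n = 1 the statement reads E_1 = −∂/∂x_{11}.) -/
open MvPolynomial

/-- Index set for the coordinates `x_{ab}`, `1 ≤ a ≤ b ≤ n`, of the big cell. -/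
abbrev TriIdx (n : ℕ) : Type := {p : ℕ × ℕ // 1 ≤ p.1 ∧ p.1 ≤ p.2 ∧ p.2 ≤ n}

/-- The raising generator `E_i = −∂/∂x_{ii} − Σ_{j=i+1}^{n} x_{i+1,j} ∂/∂x_{ij}` as a
derivation of the polynomial ring `ℝ[x_{ab} : 1 ≤ a ≤ b ≤ n]`. -/
noncomputable def Egen (n : ℕ) (i : ℕ) (h1 : 1 ≤ i) (h2 : i ≤ n) :
    Derivation ℝ (MvPolynomial (TriIdx n) ℝ) (MvPolynomial (TriIdx n) ℝ) :=
  - pderiv (⟨(i, i), h1, le_rfl, h2⟩ : TriIdx n)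
  - ∑ j ∈ (Finset.Icc (i + 1) n).attach,
      (X (⟨(i + 1, j.1), by have := Finset.mem_Icc.mp j.2; omega⟩ : TriIdx n) :
          MvPolynomial (TriIdx n) ℝ) •
        pderiv (⟨(i, j.1), by have := Finset.mem_Icc.mp j.2; omega⟩ : TriIdx n)

section helpers
variable {σ : Type*} {R : Type*} [CommRing R]

lemma pderiv_pderiv_comm' (u v : σ) (f : MvPolynomial σ R) :
    pderiv u (pderiv v f) = pderiv v (pderiv u f) := by
  induction f using MvPolynomial.induction_on with
  | C a => simp
  | add p q hp hq => simp [hp, hq]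
  | mul_X p i hp =>
    classical
    simp only [pderiv_mul, map_add, pderiv_X, hp]
    rcases eq_or_ne u i with h1 | h1 <;> rcases eq_or_ne v i with h2 | h2 <;>
      simp [Pi.single_apply, h1, h2, hp]

variable {A : Type*} [CommRing A] [Algebra R A]

lemma lie_smul_right (D D' : Derivation R A A) (f : A) :
    ⁅D, f • D'⁆ = D f • D' + f • ⁅D, D'⁆ := by
  ext a
  simp only [Derivation.commutator_apply, Derivation.smul_apply, Derivation.add_apply,
    Derivation.leibniz, smul_eq_mul, map_smul]
  ring

lemma lie_smul_left (D D' : Derivation R A A) (f : A) :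
    ⁅f • D, D'⁆ = -(D' f) • D + f • ⁅D, D'⁆ := by
  ext a
  simp only [Derivation.commutator_apply, Derivation.smul_apply, Derivation.add_apply,
    Derivation.leibniz, smul_eq_mul, map_smul, Derivation.neg_apply, neg_smul]
  ring

lemma der_lie_add (D E F : Derivation R A A) : ⁅D, E + F⁆ = ⁅D, E⁆ + ⁅D, F⁆ := by
  ext a; simp [Derivation.commutator_apply]; try ring

lemma der_add_lie (D E F : Derivation R A A) : ⁅D + E, F⁆ = ⁅D, F⁆ + ⁅E, F⁆ := by
  ext a; simp [Derivation.commutator_apply]; try ring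

lemma der_lie_neg (D E : Derivation R A A) : ⁅D, -E⁆ = -⁅D, E⁆ := by
  ext a; simp [Derivation.commutator_apply]; try ring

lemma der_neg_lie (D E : Derivation R A A) : ⁅-D, E⁆ = -⁅D, E⁆ := by
  ext a; simp [Derivation.commutator_apply]; try ring

lemma der_lie_sub (D E F : Derivation R A A) : ⁅D, E - F⁆ = ⁅D, E⁆ - ⁅D, F⁆ := by
  ext a; simp [Derivation.commutator_apply]; try ring

lemma der_sub_lie (D E F : Derivation R A A) : ⁅D - E, F⁆ = ⁅D, F⁆ - ⁅E, F⁆ := by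
  ext a; simp [Derivation.commutator_apply]; try ring

lemma der_lie_zero (D : Derivation R A A) : ⁅D, (0 : Derivation R A A)⁆ = 0 := by
  ext a; simp [Derivation.commutator_apply]

lemma der_zero_lie (D : Derivation R A A) : ⁅(0 : Derivation R A A), D⁆ = 0 := by
  ext a; simp [Derivation.commutator_apply]

lemma der_lie_sum {ι : Type*} (s : Finset ι) (D : Derivation R A A) (f : ι → Derivation R A A) :
    ⁅D, ∑ i ∈ s, f i⁆ = ∑ i ∈ s, ⁅D, f i⁆ := by
  induction s using Finset.cons_induction with
  | empty => simpa using der_lie_zero D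
  | cons a s ha ih => rw [Finset.sum_cons, Finset.sum_cons, der_lie_add, ih]

lemma der_sum_lie {ι : Type*} (s : Finset ι) (D : Derivation R A A) (f : ι → Derivation R A A) :
    ⁅∑ i ∈ s, f i, D⁆ = ∑ i ∈ s, ⁅f i, D⁆ := by
  induction s using Finset.cons_induction with
  | empty => simpa using der_zero_lie D
  | cons a s ha ih => rw [Finset.sum_cons, Finset.sum_cons, der_add_lie, ih]

end helpers

noncomputable def Pd (n a b : ℕ) :
    Derivation ℝ (MvPolynomial (TriIdx n) ℝ) (MvPolynomial (TriIdx n) ℝ) :=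
  if h : 1 ≤ a ∧ a ≤ b ∧ b ≤ n then pderiv (⟨(a, b), h⟩ : TriIdx n) else 0

noncomputable def XX (n a b : ℕ) : MvPolynomial (TriIdx n) ℝ :=
  if h : 1 ≤ a ∧ a ≤ b ∧ b ≤ n then X (⟨(a, b), h⟩ : TriIdx n) else 0

noncomputable def Cd (n k : ℕ) :
    Derivation ℝ (MvPolynomial (TriIdx n) ℝ) (MvPolynomial (TriIdx n) ℝ) :=
  - Pd n 1 k - ∑ j ∈ Finset.Icc (k + 1) n, XX n (k + 1) j • Pd n 1 j

lemma Pd_eq (n a b : ℕ) (h : 1 ≤ a ∧ a ≤ b ∧ b ≤ n) :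
    Pd n a b = pderiv (⟨(a, b), h⟩ : TriIdx n) := dif_pos h

lemma lie_Pd_Pd (n a b c d : ℕ) : ⁅Pd n a b, Pd n c d⁆ = 0 := by
  refine Derivation.ext fun f => ?_
  rw [Derivation.commutator_apply]
  unfold Pd
  split_ifs <;> simp [pderiv_pderiv_comm']

lemma Pd_XX_ne {n a b c d : ℕ} (h : (c, d) ≠ (a, b)) : Pd n a b (XX n c d) = 0 := by
  unfold Pd XX
  split_ifs with h1 h2 h2
  · exact pderiv_X_of_ne (fun hh => h (congrArg Subtype.val hh))
  · simp
  · simp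
  · simp

lemma Pd_XX_self {n a b : ℕ} (h : 1 ≤ a ∧ a ≤ b ∧ b ≤ n) : Pd n a b (XX n a b) = 1 := by
  rw [Pd, XX, dif_pos h, dif_pos h, pderiv_X_self]

lemma neg_smul_der {n : ℕ} (f : MvPolynomial (TriIdx n) ℝ)
    (D : Derivation ℝ (MvPolynomial (TriIdx n) ℝ) (MvPolynomial (TriIdx n) ℝ)) :
    (-f) • D = -(f • D) := by
  ext a
  simp

lemma Egen_eq (n i : ℕ) (h1 : 1 ≤ i) (h2 : i ≤ n) :
    Egen n i h1 h2 = - Pd n i i - ∑ j ∈ Finset.Icc (i + 1) n, XX n (i + 1) j • Pd n i j := by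
  unfold Egen
  rw [Pd_eq n i i ⟨h1, le_rfl, h2⟩]
  congr 1
  rw [← Finset.sum_attach (Finset.Icc (i + 1) n) (fun m => XX n (i + 1) m • Pd n i m)]
  refine Finset.sum_congr rfl fun j _ => ?_
  have hj := Finset.mem_Icc.mp j.2
  rw [XX, Pd, dif_pos (by omega : 1 ≤ i + 1 ∧ i + 1 ≤ j.1 ∧ j.1 ≤ n),
    dif_pos (by omega : 1 ≤ i ∧ i ≤ j.1 ∧ j.1 ≤ n)]

set_option maxHeartbeats 2000000 in
lemma key (n k : ℕ) (h1 : 1 ≤ k) (h2 : k + 1 ≤ n) :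
    ⁅Cd n k, Egen n (k + 1) (by omega) h2⁆ = Cd n (k + 1) := by
  rw [Egen_eq]
  have T2 : ∀ j' ∈ Finset.Icc (k + 2) n,
      ⁅Pd n 1 k, XX n (k + 2) j' • Pd n (k + 1) j'⁆ = 0 := by
    intro j' _
    rw [lie_smul_right, Pd_XX_ne (by intro h; rw [Prod.mk.injEq] at h; omega), lie_Pd_Pd,
      zero_smul, smul_zero, add_zero]
  have T3 : ∑ j ∈ Finset.Icc (k + 1) n, ⁅XX n (k + 1) j • Pd n 1 j, Pd n (k + 1) (k + 1)⁆
      = - Pd n 1 (k + 1) := by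
    rw [Finset.sum_eq_single_of_mem (k + 1) (Finset.mem_Icc.mpr ⟨le_rfl, h2⟩)]
    · rw [lie_smul_left, lie_Pd_Pd, smul_zero, add_zero,
        Pd_XX_self ⟨by omega, le_rfl, h2⟩, neg_smul_der, one_smul]
    · intro j hj hne
      rw [lie_smul_left, Pd_XX_ne (by intro h; rw [Prod.mk.injEq] at h; omega), neg_zero,
        zero_smul, zero_add, lie_Pd_Pd, smul_zero]
  have T4 : ∑ j ∈ Finset.Icc (k + 1) n, ∑ j' ∈ Finset.Icc (k + 2) n,
      ⁅XX n (k + 1) j • Pd n 1 j, XX n (k + 2) j' • Pd n (k + 1) j'⁆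
      = - ∑ j ∈ Finset.Icc (k + 2) n, XX n (k + 2) j • Pd n 1 j := by
    have inner : ∀ j ∈ Finset.Icc (k + 1) n, ∀ j' ∈ Finset.Icc (k + 2) n,
        ⁅XX n (k + 1) j • Pd n 1 j, XX n (k + 2) j' • Pd n (k + 1) j'⁆
        = if j' = j then -(XX n (k + 2) j • Pd n 1 j) else 0 := by
      intro j hj j' hj'
      have hj2 := Finset.mem_Icc.mp hj
      have hj'2 := Finset.mem_Icc.mp hj'
      rw [lie_smul_left, lie_smul_right,
        Pd_XX_ne (by intro h; rw [Prod.mk.injEq] at h; omega), lie_Pd_Pd,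
        zero_smul, smul_zero, add_zero, smul_zero, add_zero, Derivation.smul_apply]
      by_cases hjj : j' = j
      · subst hjj
        rw [Pd_XX_self ⟨by omega, by omega, by omega⟩, if_pos rfl, smul_eq_mul, mul_one,
          neg_smul_der]
      · rw [Pd_XX_ne (by intro h; rw [Prod.mk.injEq] at h; omega), smul_zero, neg_zero,
          zero_smul, if_neg hjj]
    calc ∑ j ∈ Finset.Icc (k + 1) n, ∑ j' ∈ Finset.Icc (k + 2) n,
          ⁅XX n (k + 1) j • Pd n 1 j, XX n (k + 2) j' • Pd n (k + 1) j'⁆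
        = ∑ j ∈ Finset.Icc (k + 1) n, ∑ j' ∈ Finset.Icc (k + 2) n,
          (if j' = j then -(XX n (k + 2) j • Pd n 1 j) else 0) := by
          exact Finset.sum_congr rfl fun j hj =>
            Finset.sum_congr rfl fun j' hj' => inner j hj j' hj'
      _ = ∑ j ∈ Finset.Icc (k + 1) n,
          (if j ∈ Finset.Icc (k + 2) n then -(XX n (k + 2) j • Pd n 1 j) else 0) := by
          refine Finset.sum_congr rfl fun j hj => ?_
          rw [Finset.sum_ite_eq' (Finset.Icc (k + 2) n) j
            (fun _ => -(XX n (k + 2) j • Pd n 1 j))]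
      _ = ∑ j ∈ Finset.Icc (k + 1) n ∩ Finset.Icc (k + 2) n,
          -(XX n (k + 2) j • Pd n 1 j) := by rw [Finset.sum_ite_mem]
      _ = - ∑ j ∈ Finset.Icc (k + 2) n, XX n (k + 2) j • Pd n 1 j := by
          rw [show Finset.Icc (k + 1) n ∩ Finset.Icc (k + 2) n = Finset.Icc (k + 2) n by
              ext m; simp [Finset.mem_Icc]; omega,
            Finset.sum_neg_distrib]
  simp only [show k + 1 + 1 = k + 2 from rfl]
  have E1 : ⁅-Pd n 1 k, -Pd n (k + 1) (k + 1)⁆ = (0 : Derivation ℝ (MvPolynomial (TriIdx n) ℝ)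
      (MvPolynomial (TriIdx n) ℝ)) := by
    rw [der_neg_lie, der_lie_neg, lie_Pd_Pd, neg_neg]
  have E2 : ⁅-Pd n 1 k, ∑ j' ∈ Finset.Icc (k + 2) n, XX n (k + 2) j' • Pd n (k + 1) j'⁆
      = (0 : Derivation ℝ (MvPolynomial (TriIdx n) ℝ) (MvPolynomial (TriIdx n) ℝ)) := by
    rw [der_neg_lie, der_lie_sum, Finset.sum_congr rfl T2, Finset.sum_const_zero, neg_zero]
  have E3 : ⁅∑ j ∈ Finset.Icc (k + 1) n, XX n (k + 1) j • Pd n 1 j, -Pd n (k + 1) (k + 1)⁆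
      = Pd n 1 (k + 1) := by
    rw [der_lie_neg, der_sum_lie, T3, neg_neg]
  have E4 : ⁅∑ j ∈ Finset.Icc (k + 1) n, XX n (k + 1) j • Pd n 1 j,
      ∑ j' ∈ Finset.Icc (k + 2) n, XX n (k + 2) j' • Pd n (k + 1) j'⁆
      = - ∑ j ∈ Finset.Icc (k + 2) n, XX n (k + 2) j • Pd n 1 j := by
    rw [der_sum_lie]
    rw [Finset.sum_congr rfl fun j hj => der_lie_sum (Finset.Icc (k + 2) n)
      (XX n (k + 1) j • Pd n 1 j) (fun j' => XX n (k + 2) j' • Pd n (k + 1) j')]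
    exact T4
  rw [show Cd n k = - Pd n 1 k - ∑ j ∈ Finset.Icc (k + 1) n, XX n (k + 1) j • Pd n 1 j from rfl,
    show Cd n (k + 1) = - Pd n 1 (k + 1)
      - ∑ j ∈ Finset.Icc (k + 2) n, XX n (k + 2) j • Pd n 1 j from rfl]
  rw [der_sub_lie, der_lie_sub, der_lie_sub, E1, E2, E3, E4]
  abel

lemma Egen_one (n : ℕ) (hn : 1 ≤ n) : Egen n 1 le_rfl hn = Cd n 1 := by
  rw [Egen_eq]
  rfl

lemma Cd_top (n : ℕ) (hn : 1 ≤ n) :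
    Cd n n = - pderiv (⟨(1, n), le_rfl, hn, le_rfl⟩ : TriIdx n) := by
  rw [show Cd n n = - Pd n 1 n - ∑ j ∈ Finset.Icc (n + 1) n, XX n (n + 1) j • Pd n 1 j from rfl,
    Finset.Icc_eq_empty (by omega), Finset.sum_empty, sub_zero,
    Pd_eq n 1 n ⟨le_rfl, hn, le_rfl⟩]

/-- The iterated Lie bracket `[⋯[[E_1, E_2], E_3], ⋯, E_n]` of the derivations `E_i`
equals the derivation `−∂/∂x_{1n}` (for `n = 1` this reads `E_1 = −∂/∂x_{11}`). -/
theorem stmt0 (n : ℕ) (hn : 1 ≤ n)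
    (B : ℕ → Derivation ℝ (MvPolynomial (TriIdx n) ℝ) (MvPolynomial (TriIdx n) ℝ))
    (hB1 : B 1 = Egen n 1 le_rfl hn)
    (hBstep : ∀ i, 1 ≤ i → ∀ h2 : i + 1 ≤ n,
      B (i + 1) = ⁅B i, Egen n (i + 1) (by omega) h2⁆) :
    B n = - pderiv (⟨(1, n), le_rfl, hn, le_rfl⟩ : TriIdx n) := by
  have main : ∀ k, 1 ≤ k → k ≤ n → B k = Cd n k := by
    intro k
    induction k with
    | zero => omega
    | succ m ih =>
      intro h1 h2
      rcases Nat.eq_zero_or_pos m with hm | hm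
      · subst hm
        rw [hB1, Egen_one]
      · rw [hBstep m hm h2, ih hm (by omega), key n m hm h2]
  rw [main n hn le_rfl, Cd_top n hn]
end

section
/- Fix n ≥ 1, indices 1 ≤ j ≤ n, k ≥ 1 with j + k ≤ n+1, integers 1 ≤ i_k ≤ ⋯ ≤ i_1 ≤ j, and 1 ≤ r ≤ k. Set l = j + r − 1 − i_r and assume 1 ≤ l ≤ n. Let Q′ denote Q^j with the r-th index i_r replaced by i_r + 1 (the determinant being 0 if the resulting row list has a repeated or out-of-range entry). Then, as an identity of rational functions in the variables x_{ab} and t: if l ≠ j, applying the substitution Φ^l_t to every entry of the defining submatrix of Q^j_{i_1,…,i_k} yields the determinant Q′·t + Q^j_{i_1,…,i_k}; if l = j, it yields (Q′·t + Q^j_{i_1,…,i_k})/(1 + x_{jj}t). -/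
/-- Constructor for elements of `TriIdx n`. -/
def mk' {n : ℕ} (a b : ℕ) (h1 : 1 ≤ a) (h2 : a ≤ b) (h3 : b ≤ n) : TriIdx n :=
  ⟨(a, b), h1, h2, h3⟩

/-- The matrix `T`: `T_{ab} = x_{ab}` for `a ≤ b`, `T_{ab} = 1` for `a = b+1`, and
`T_{ab} = 0` otherwise (in particular whenever an index lies outside `{1,…,n}`). -/
noncomputable def Tmat (n : ℕ) (x : TriIdx n → ℝ) (a b : ℕ) : ℝ :=
  if h : 1 ≤ a ∧ a ≤ b ∧ b ≤ n then x (mk' a b h.1 h.2.1 h.2.2)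
  else if a = b + 1 ∧ 1 ≤ b ∧ a ≤ n then 1
  else 0

/-- The minor `Q^j_{i_1,…,i_k}`: the determinant of the `k×k` matrix whose `(p,q)` entry is
`T_{j+p−i_p, j+q−1}` (`p`, `q` running over `1,…,k`). -/
noncomputable def Qmin (n : ℕ) (x : TriIdx n → ℝ) (j k : ℕ) (i : Fin k → ℕ) : ℝ :=
  Matrix.det (Matrix.of fun p q : Fin k =>
    Tmat n x (j + (p : ℕ) + 1 - i p) (j + (q : ℕ)))

/-- The substitution `Φ^i_t`. -/
noncomputable def Phi {n : ℕ} (i : ℕ) (h1 : 1 ≤ i) (h2 : i ≤ n) (t : ℝ)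
    (x : TriIdx n → ℝ) : TriIdx n → ℝ := fun v =>
  if v.1.2 = i then
    x v / (1 + x (mk' i i h1 le_rfl h2) * t)
  else if h : v.1.2 + 1 = i then
    -(x (mk' v.1.1 i v.2.1 (by have := v.2.2.1; omega) h2)
        - x v * x (mk' i i h1 le_rfl h2)) * t + x v
  else if h' : v.1.1 = i + 1 then
    x (mk' i v.1.2 h1 (by have := v.2.2.1; omega) v.2.2.2) * t + x v
  else x v

set_option linter.unreachableTactic false
set_option linter.unusedTactic false

lemma Tmat_phi (n l : ℕ) (hl1 : 1 ≤ l) (hl2 : l ≤ n) (t : ℝ) (x : TriIdx n → ℝ)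
    (hden : 1 + x (mk' l l hl1 le_rfl hl2) * t ≠ 0)
    (a b : ℕ) (ha1 : 1 ≤ a) (han : a ≤ n) (hb1 : 1 ≤ b) (hbn : b ≤ n) :
    Tmat n (Phi l hl1 hl2 t x) a b =
      if b = l then
        (Tmat n x a b + (if a = l + 1 then t * Tmat n x l b else 0))
          / (1 + x (mk' l l hl1 le_rfl hl2) * t)
      else if b + 1 = l then
        (1 + x (mk' l l hl1 le_rfl hl2) * t)
            * (Tmat n x a b + (if a = l + 1 then t * Tmat n x l b else 0))
          - t * (Tmat n x a (b+1) + (if a = l + 1 then t * Tmat n x l (b+1) else 0))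
      else
        Tmat n x a b + (if a = l + 1 then t * Tmat n x l b else 0) := by
  simp only [Tmat, Phi, mk'] at hden ⊢
  split_ifs <;>
    first
      | rfl
      | omega
      | ((try casesm* _ ∧ _); subst_vars;
         first | (field_simp; done) | (field_simp; ring1) | ring1 | (simp; done) | omega | (rw [eq_div_iff hden]; ring1) | (simp_all; intro; omega) | (simp_all; split_ifs <;> (try subst_vars) <;> first | omega | (simp_all; done) | ring1))

/-- Transformation of the minor `Q^j_{i_1,…,i_k}` under the substitution `Φ^l_t`, where
`l = j + r − 1 − i_r` for some `1 ≤ r ≤ k`: applying `Φ^l_t` to every entry yields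
`Q′·t + Q^j_{i_1,…,i_k}` when `l ≠ j`, and `(Q′·t + Q^j_{i_1,…,i_k})/(1 + x_{jj}t)` when
`l = j`, `Q′` being the minor with `i_r` replaced by `i_r + 1`. -/
theorem stmt5 (n j k : ℕ) (hn : 1 ≤ n) (hj1 : 1 ≤ j) (hjn : j ≤ n)
    (hk : 1 ≤ k) (hjk : j + k ≤ n + 1)
    (i : Fin k → ℕ) (hi1 : ∀ p, 1 ≤ i p) (hij : ∀ p, i p ≤ j)
    (hmono : ∀ p q : Fin k, p ≤ q → i q ≤ i p)
    (r : Fin k) (l : ℕ) (hl : l = j + (r : ℕ) - i r)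
    (hl1 : 1 ≤ l) (hl2 : l ≤ n)
    (x : TriIdx n → ℝ) (t : ℝ)
    (hden : 1 + x (mk' l l hl1 le_rfl hl2) * t ≠ 0) :
    Qmin n (Phi l hl1 hl2 t x) j k i =
      if l ≠ j then
        Qmin n x j k (Function.update i r (i r + 1)) * t + Qmin n x j k i
      else
        (Qmin n x j k (Function.update i r (i r + 1)) * t + Qmin n x j k i)
          / (1 + x (mk' l l hl1 le_rfl hl2) * t) := by
  classical
  set s : ℝ := 1 + x (mk' l l hl1 le_rfl hl2) * t with hsdef
  have hrk : (r : ℕ) < k := r.isLt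
  have hir1 : 1 ≤ i r := hi1 r
  have hirj : i r ≤ j := hij r
  have hlval : l + i r = j + (r : ℕ) := by omega
  have hrowmono : ∀ p q : Fin k, p < q →
      j + (p : ℕ) + 1 - i p < j + (q : ℕ) + 1 - i q := by
    intro p q hpq
    have h1 : i q ≤ i p := hmono p q (le_of_lt hpq)
    have h2 : i p ≤ j := hij p
    have h3 : (p : ℕ) < (q : ℕ) := hpq
    omega
  have hrow : ∀ p : Fin k, (j + (p : ℕ) + 1 - i p = l + 1) ↔ p = r := by
    intro p
    constructor
    · intro h
      rcases lt_trichotomy p r with hc | hc | hc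
      · exact absurd h (by have := hrowmono p r hc; omega)
      · exact hc
      · exact absurd h (by have := hrowmono r p hc; omega)
    · intro h; subst h; omega
  set A : Matrix (Fin k) (Fin k) ℝ :=
    Matrix.of (fun p q : Fin k => Tmat n x (j + (p : ℕ) + 1 - i p) (j + (q : ℕ))) with hA
  set w : Fin k → ℝ := fun q : Fin k => Tmat n x l (j + (q : ℕ)) with hw
  set B : Matrix (Fin k) (Fin k) ℝ :=
    A.updateRow r (fun q => A r q + t * w q) with hB
  have hQ : Qmin n x j k i = A.det := rfl
  have hQ' : Qmin n x j k (Function.update i r (i r + 1)) = (A.updateRow r w).det := by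
    unfold Qmin
    congr 1
    ext p q
    by_cases hp : p = r
    · subst hp
      simp only [Matrix.of_apply, Matrix.updateRow_self, Function.update_self, hw]
      rw [show j + (p : ℕ) + 1 - (i p + 1) = l from by omega]
    · simp only [Matrix.of_apply, Matrix.updateRow_ne hp, Function.update_of_ne hp, hA]
  have hdetB : B.det = A.det + t * (A.updateRow r w).det := by
    have h1 : (fun q => A r q + t * w q) = A r + t • w := by
      ext q; simp [Pi.add_apply, Pi.smul_apply, smul_eq_mul]
    rw [hB, h1, Matrix.det_updateRow_add, Matrix.updateRow_eq_self,
      Matrix.det_updateRow_smul]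
  have hBentry : ∀ p q : Fin k, B p q =
      Tmat n x (j + (p : ℕ) + 1 - i p) (j + (q : ℕ)) +
        (if j + (p : ℕ) + 1 - i p = l + 1 then t * Tmat n x l (j + (q : ℕ)) else 0) := by
    intro p q
    by_cases hp : p = r
    · subst hp
      rw [if_pos ((hrow p).2 rfl)]
      simp [hB, hA, hw]
    · rw [if_neg (fun h => hp ((hrow p).1 h))]
      simp [hB, Matrix.updateRow_ne hp, hA]
  have hbound : ∀ p : Fin k, 1 ≤ j + (p : ℕ) + 1 - i p ∧ j + (p : ℕ) + 1 - i p ≤ n := by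
    intro p
    have := hij p; have := hi1 p; have := p.isLt
    omega
  have hcb : ∀ q : Fin k, 1 ≤ j + (q : ℕ) ∧ j + (q : ℕ) ≤ n := by
    intro q; have := q.isLt; omega
  have hM : ∀ p q : Fin k,
      Tmat n (Phi l hl1 hl2 t x) (j + (p : ℕ) + 1 - i p) (j + (q : ℕ)) =
      if j + (q : ℕ) = l then B p q / s
      else if j + (q : ℕ) + 1 = l then
        s * B p q - t * (Tmat n x (j + (p : ℕ) + 1 - i p) (j + (q : ℕ) + 1) +
          (if j + (p : ℕ) + 1 - i p = l + 1 then t * Tmat n x l (j + (q : ℕ) + 1) else 0))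
      else B p q := by
    intro p q
    rw [Tmat_phi n l hl1 hl2 t x hden _ _ (hbound p).1 (hbound p).2 (hcb q).1 (hcb q).2,
      hBentry p q]
  have hlk : l < j + k - 1 := by omega
  by_cases hlj : l < j
  · have hMB : Qmin n (Phi l hl1 hl2 t x) j k i = B.det := by
      unfold Qmin
      congr 1
      ext p q
      rw [Matrix.of_apply, hM p q, if_neg (by omega), if_neg (by omega)]
    rw [hMB, hdetB, if_pos (by omega : l ≠ j), hQ, hQ']
    ring
  · by_cases hlj2 : l = j
    · -- l = j : only column 0 is rescaled
      have hq0 : (0 : ℕ) < k := hk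
      set q0 : Fin k := ⟨0, hq0⟩ with hq0def
      have hq0v : (q0 : ℕ) = 0 := rfl
      have hMB : Qmin n (Phi l hl1 hl2 t x) j k i =
          (B.updateCol q0 (fun p => B p q0 / s)).det := by
        unfold Qmin
        congr 1
        ext p q
        by_cases hq : q = q0
        · subst hq
          rw [Matrix.of_apply, hM p q0, if_pos (by omega), Matrix.updateCol_self]
        · have hqv : (q : ℕ) ≠ 0 := fun h => hq (Fin.ext (h.trans hq0v.symm))
          rw [Matrix.of_apply, hM p q, if_neg (by omega), if_neg (by omega),
            Matrix.updateCol_ne hq]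
      have h1 : (fun p => B p q0 / s) = s⁻¹ • (fun p => B p q0) := by
        ext p; simp [div_eq_inv_mul]
      rw [hMB, h1, Matrix.det_updateCol_smul, Matrix.updateCol_eq_self,
        hdetB, if_neg (by omega : ¬ l ≠ j), hQ, hQ']
      field_simp
      ring
    · -- l > j : two columns involved
      have hljlt : j < l := by omega
      have hq2 : l - j < k := by omega
      have hq1 : l - 1 - j < k := by omega
      set q2 : Fin k := ⟨l - j, hq2⟩ with hq2def
      set q1 : Fin k := ⟨l - 1 - j, hq1⟩ with hq1def
      have hq2v : (q2 : ℕ) = l - j := rfl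
      have hq1v : (q1 : ℕ) = l - 1 - j := rfl
      have hq12 : q1 ≠ q2 := by
        intro h
        have := congrArg Fin.val h
        rw [hq1v, hq2v] at this
        omega
      set C : Matrix (Fin k) (Fin k) ℝ := B.updateCol q2 (fun p => B p q2 / s) with hC
      have hcolB : ∀ p : Fin k,
          Tmat n x (j + (p : ℕ) + 1 - i p) (j + (q1 : ℕ) + 1) +
            (if j + (p : ℕ) + 1 - i p = l + 1
              then t * Tmat n x l (j + (q1 : ℕ) + 1) else 0) = B p q2 := by
        intro p
        rw [hBentry p q2]
        rw [show j + (q1 : ℕ) + 1 = j + (q2 : ℕ) from by rw [hq1v, hq2v]; omega]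
      have hMB : Qmin n (Phi l hl1 hl2 t x) j k i =
          (C.updateCol q1 (fun p => s * B p q1 - t * B p q2)).det := by
        unfold Qmin
        congr 1
        ext p q
        by_cases hq : q = q1
        · subst hq
          rw [Matrix.of_apply, hM p q1, if_neg (by rw [hq1v]; omega)]
          rw [if_pos (by rw [hq1v]; omega), Matrix.updateCol_self, hcolB p]
        · by_cases hq' : q = q2
          · subst hq'
            rw [Matrix.of_apply, hM p q2, if_pos (by rw [hq2v]; omega),
              Matrix.updateCol_ne hq, hC, Matrix.updateCol_self]
          · have hv1 : (q : ℕ) ≠ l - 1 - j := fun h => hq (Fin.ext (h.trans hq1v.symm))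
            have hv2 : (q : ℕ) ≠ l - j := fun h => hq' (Fin.ext (h.trans hq2v.symm))
            rw [Matrix.of_apply, hM p q, if_neg (by omega), if_neg (by omega),
              Matrix.updateCol_ne hq, hC, Matrix.updateCol_ne hq']
      have hdetC : C.det = s⁻¹ * B.det := by
        have h1 : (fun p => B p q2 / s) = s⁻¹ • (fun p => B p q2) := by
          ext p; simp [div_eq_inv_mul]
        rw [hC, h1, Matrix.det_updateCol_smul, Matrix.updateCol_eq_self]
      have hCcol : ∀ p, C p q1 = B p q1 := by
        intro p; rw [hC, Matrix.updateCol_ne hq12]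
      have hg : (fun p => s * B p q1 - t * B p q2)
          = (s • (fun p => C p q1)) + ((-t) • (fun p => B p q2)) := by
        ext p
        simp only [Pi.add_apply, Pi.smul_apply, smul_eq_mul, hCcol p]
        ring
      -- the degenerate term vanishes
      have hzero : (C.updateCol q1 (fun p => B p q2)).det = 0 := by
        set E : Matrix (Fin k) (Fin k) ℝ := B.updateCol q1 (fun p => B p q2) with hE
        have hEcol : (fun p => B p q2) = fun p => E p q2 := by
          ext p; rw [hE, Matrix.updateCol_ne hq12.symm]
        have hD : C.updateCol q1 (fun p => B p q2)
            = E.updateCol q2 (s⁻¹ • (fun p => E p q2)) := by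
          ext p q
          by_cases h1 : q = q1
          · subst h1
            rw [Matrix.updateCol_self, Matrix.updateCol_ne hq12, hE,
              Matrix.updateCol_self]
          · by_cases h2 : q = q2
            · subst h2
              rw [Matrix.updateCol_ne h1, hC, Matrix.updateCol_self,
                Matrix.updateCol_self, Pi.smul_apply, smul_eq_mul, hE,
                Matrix.updateCol_ne hq12.symm, div_eq_inv_mul]
            · rw [Matrix.updateCol_ne h1, hC, Matrix.updateCol_ne h2,
                Matrix.updateCol_ne h2, hE, Matrix.updateCol_ne h1]
        rw [hD, Matrix.det_updateCol_smul, Matrix.updateCol_eq_self, hE,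
          Matrix.det_updateCol_eq_zero hq12.symm, mul_zero]
      rw [hMB, hg, Matrix.det_updateCol_add, Matrix.det_updateCol_smul,
        Matrix.det_updateCol_smul, Matrix.updateCol_eq_self, hzero, hdetC,
        hdetB, if_pos (by omega : l ≠ j), hQ, hQ']
      field_simp
      ring
end

section
/- Fix n ≥ 1, indices 1 ≤ j ≤ n, k ≥ 0 with j + k ≤ n, and integers 1 ≤ i_k ≤ ⋯ ≤ i_1 ≤ j. Set l = j + k and let Q′ = Q^j_{i_1,…,i_k,1} (the (k+1)×(k+1) minor obtained by appending the index i_{k+1} = 1, i.e. adjoining row j+k and column j+k). Then, as an identity of rational functions in the variables x_{ab} and t: if k ≥ 1, applying the substitution Φ^{j+k}_t to every entry of the defining submatrix of Q^j_{i_1,…,i_k} yields Q′·t + Q^j_{i_1,…,i_k}; if k = 0 (so l = j), one has the identity 1 = (Q^j_1 · t + 1)/(1 + x_{jj}t), i.e. Q^j_1 = x_{jj}. -/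
lemma Tmat_pos {n : ℕ} (x : TriIdx n → ℝ) {a b : ℕ} (h1 : 1 ≤ a) (h2 : a ≤ b) (h3 : b ≤ n) :
    Tmat n x a b = x (mk' a b h1 h2 h3) := by
  unfold Tmat
  rw [dif_pos ⟨h1, h2, h3⟩]

lemma Tmat_one {n : ℕ} (x : TriIdx n → ℝ) {a b : ℕ} (h : a = b + 1) (hb : 1 ≤ b)
    (han : a ≤ n) : Tmat n x a b = 1 := by
  unfold Tmat
  rw [dif_neg (by omega), if_pos ⟨h, hb, han⟩]

lemma Tmat_zero {n : ℕ} (x : TriIdx n → ℝ) {a b : ℕ} (h : b + 1 < a) :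
    Tmat n x a b = 0 := by
  unfold Tmat
  rw [dif_neg (by omega), if_neg (by omega)]

/-- Transformation of the minor `Q^j_{i_1,…,i_k}` under the substitution `Φ^{j+k}_t`
(an edge of the second type): for `k ≥ 1` applying `Φ^{j+k}_t` to every entry yields
`Q^j_{i_1,…,i_k,1}·t + Q^j_{i_1,…,i_k}`; for `k = 0` one has the identity
`1 = (Q^j_1·t + 1)/(1 + x_{jj}t)`, i.e. `Q^j_1 = x_{jj}`. -/
theorem stmt6 (n j k : ℕ) (hn : 1 ≤ n) (hj1 : 1 ≤ j) (hjk : j + k ≤ n)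
    (i : Fin k → ℕ) (hi1 : ∀ p, 1 ≤ i p) (hij : ∀ p, i p ≤ j)
    (hmono : ∀ p q : Fin k, p ≤ q → i q ≤ i p)
    (x : TriIdx n → ℝ) (t : ℝ)
    (hden : 1 + x (mk' (j + k) (j + k) (by omega) le_rfl hjk) * t ≠ 0) :
    (1 ≤ k →
      Qmin n (Phi (j + k) (by omega) hjk t x) j k i =
        Qmin n x j (k + 1) (Fin.snoc i 1) * t + Qmin n x j k i) ∧
    (k = 0 → Qmin n x j 1 (fun _ => 1) = x (mk' j j hj1 le_rfl (by omega))) := by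
  constructor
  · intro hk
    obtain ⟨m, rfl⟩ : ∃ m, k = m + 1 := ⟨k - 1, by omega⟩
    clear hk hden
    have hln : j + (m + 1) ≤ n := hjk
    have hl1 : 1 ≤ j + (m + 1) := by omega
    set l : ℕ := j + (m + 1) with hl
    set xll : ℝ := x (mk' l l hl1 le_rfl hln) with hxll
    set M : Matrix (Fin (m + 1)) (Fin (m + 1)) ℝ :=
      Matrix.of (fun p q : Fin (m + 1) => Tmat n x (j + (p : ℕ) + 1 - i p) (j + (q : ℕ)))
      with hM
    set c2 : Fin (m + 1) → ℝ := fun p => Tmat n x (j + (p : ℕ) + 1 - i p) l with hc2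
    have ha : ∀ p : Fin (m + 1), 1 ≤ j + (p : ℕ) + 1 - i p ∧ j + (p : ℕ) + 1 - i p ≤ j + (p : ℕ)
        := by
      intro p
      have := hi1 p; have := hij p
      omega
    -- Step 1 : the substituted matrix
    have hM' : (Matrix.of fun p q : Fin (m + 1) =>
        Tmat n (Phi l hl1 hln t x) (j + (p : ℕ) + 1 - i p) (j + (q : ℕ)))
        = M.updateCol (Fin.last m)
            (fun p => (1 + xll * t) * M p (Fin.last m) + (-t) * c2 p) := by
      ext p q
      have hap := ha p
      have hpm : (p : ℕ) ≤ m := Nat.le_of_lt_succ p.isLt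
      by_cases hq : q = Fin.last m
      · subst hq
        rw [Matrix.of_apply, Matrix.updateCol_self]
        have hb : j + (Fin.last m : ℕ) = j + m := by rw [Fin.val_last]
        have hle : j + (p : ℕ) + 1 - i p ≤ j + m := by omega
        rw [hM]
        simp only [Matrix.of_apply]
        rw [hb, Tmat_pos x hap.1 hle (by omega), hc2]
        simp only
        rw [Tmat_pos x hap.1 (by omega) hln]
        rw [Tmat_pos (Phi l hl1 hln t x) hap.1 hle (by omega)]
        unfold Phi
        rw [if_neg (by simp only [mk']; omega), dif_pos (by simp only [mk']; omega)]
        have key : ∀ (T A B C : ℝ), -(B - A * C) * T + A = (1 + C * T) * A + -T * B := by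
          intros; ring
        exact key t _ _ _
      · rw [Matrix.of_apply, Matrix.updateCol_ne hq]
        have hqm : (q : ℕ) < m := by
          rcases lt_or_eq_of_le (Nat.le_of_lt_succ q.isLt) with h | h
          · exact h
          · exact absurd (Fin.ext h) hq
        rw [hM]
        simp only [Matrix.of_apply]
        by_cases hC : 1 ≤ j + (p : ℕ) + 1 - i p ∧ j + (p : ℕ) + 1 - i p ≤ j + (q : ℕ)
            ∧ j + (q : ℕ) ≤ n
        · rw [Tmat_pos x hC.1 hC.2.1 hC.2.2, Tmat_pos _ hC.1 hC.2.1 hC.2.2]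
          unfold Phi
          rw [if_neg (by simp only [mk']; omega), dif_neg (by simp only [mk']; omega),
            dif_neg (by simp only [mk']; omega)]
        · unfold Tmat
          rw [dif_neg hC, dif_neg hC]
    -- Step 1 det
    have hdet1 : Qmin n (Phi l hl1 hln t x) j (m + 1) i
        = (1 + xll * t) * M.det + (-t) * (M.updateCol (Fin.last m) c2).det := by
      rw [Qmin, hM']
      have hfun : (fun p => (1 + xll * t) * M p (Fin.last m) + (-t) * c2 p)
          = ((1 + xll * t) • (fun p => M p (Fin.last m)) + (-t) • c2) := by
        funext p; simp [smul_eq_mul]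
      rw [hfun, Matrix.det_updateCol_add, Matrix.det_updateCol_smul,
        Matrix.det_updateCol_smul, Matrix.updateCol_eq_self]
    -- Step 2 : expansion of the bigger minor along the last row
    have hcol : ∀ q : Fin (m + 1), (((Fin.last m).castSucc).succAbove q : ℕ)
        = if (q : ℕ) < m then (q : ℕ) else m + 1 := by
      intro q
      by_cases h : (q : ℕ) < m
      · rw [if_pos h, Fin.succAbove, if_pos (by simp [Fin.lt_def]; omega)]
        rw [Fin.coe_castSucc]
      · rw [if_neg h, Fin.succAbove, if_neg (by simp [Fin.lt_def]; omega)]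
        have := q.isLt
        simp [Fin.val_succ]
        omega
    have hQ' : Qmin n x j (m + 1 + 1) (Fin.snoc i 1)
        = xll * M.det - (M.updateCol (Fin.last m) c2).det := by
      rw [Qmin]
      rw [Matrix.det_succ_row _ (Fin.last (m + 1))]
      rw [Fin.sum_univ_castSucc, Fin.sum_univ_castSucc]
      -- the vanishing part of the sum
      have hB0 : ∀ q : Fin m,
          (Matrix.of fun (p q : Fin (m + 1 + 1)) =>
            Tmat n x (j + (p : ℕ) + 1 - (Fin.snoc i 1 : Fin (m + 1 + 1) → ℕ) p) (j + (q : ℕ)))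
            (Fin.last (m + 1)) ((Fin.castSucc q).castSucc) = 0 := by
        intro q
        rw [Matrix.of_apply, Fin.snoc_last, Fin.val_last, Fin.coe_castSucc, Fin.coe_castSucc]
        exact Tmat_zero x (by have := q.isLt; omega)
      -- middle entry is 1
      have hmid : (Matrix.of fun (p q : Fin (m + 1 + 1)) =>
            Tmat n x (j + (p : ℕ) + 1 - (Fin.snoc i 1 : Fin (m + 1 + 1) → ℕ) p) (j + (q : ℕ)))
            (Fin.last (m + 1)) ((Fin.last m).castSucc) = 1 := by
        rw [Matrix.of_apply, Fin.snoc_last, Fin.val_last, Fin.coe_castSucc, Fin.val_last]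
        exact Tmat_one x (by omega) (by omega) (by omega)
      -- last entry is xll
      have hlastE : (Matrix.of fun (p q : Fin (m + 1 + 1)) =>
            Tmat n x (j + (p : ℕ) + 1 - (Fin.snoc i 1 : Fin (m + 1 + 1) → ℕ) p) (j + (q : ℕ)))
            (Fin.last (m + 1)) (Fin.last (m + 1)) = xll := by
        rw [Matrix.of_apply, Fin.snoc_last, Fin.val_last]
        rw [Tmat_pos x (by omega) (by omega : j + (m + 1) + 1 - 1 ≤ j + (m + 1)) hln]
        rfl
      -- the two submatrices
      have hS2 : ((Matrix.of fun (p q : Fin (m + 1 + 1)) =>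
            Tmat n x (j + (p : ℕ) + 1 - (Fin.snoc i 1 : Fin (m + 1 + 1) → ℕ) p) (j + (q : ℕ))).submatrix
            (Fin.last (m + 1)).succAbove (Fin.last (m + 1)).succAbove) = M := by
        ext p q
        rw [Matrix.submatrix_apply, Fin.succAbove_last, Matrix.of_apply,
          Fin.snoc_castSucc, Fin.coe_castSucc, Fin.coe_castSucc]
        rfl
      have hS1 : ((Matrix.of fun (p q : Fin (m + 1 + 1)) =>
            Tmat n x (j + (p : ℕ) + 1 - (Fin.snoc i 1 : Fin (m + 1 + 1) → ℕ) p) (j + (q : ℕ))).submatrix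
            (Fin.last (m + 1)).succAbove ((Fin.last m).castSucc).succAbove)
          = M.updateCol (Fin.last m) c2 := by
        ext p q
        rw [Matrix.submatrix_apply, Fin.succAbove_last, Matrix.of_apply,
          Fin.snoc_castSucc, Fin.coe_castSucc]
        by_cases hq : q = Fin.last m
        · subst hq
          rw [Matrix.updateCol_self, hc2]
          have : (((Fin.last m).castSucc).succAbove (Fin.last m) : ℕ) = m + 1 := by
            rw [hcol]
            simp
          rw [this]
        · have hqm : (q : ℕ) < m := by
            rcases lt_or_eq_of_le (Nat.le_of_lt_succ q.isLt) with h | h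
            · exact h
            · exact absurd (Fin.ext h) hq
          rw [Matrix.updateCol_ne hq, hM]
          simp only [Matrix.of_apply]
          have : (((Fin.last m).castSucc).succAbove q : ℕ) = (q : ℕ) := by
            rw [hcol, if_pos hqm]
          rw [this]
      -- signs
      have hsign1 : ((-1 : ℝ)) ^ (((Fin.last (m + 1)) : ℕ) + (((Fin.last m).castSucc) : ℕ))
          = -1 := by
        rw [Fin.val_last, Fin.coe_castSucc, Fin.val_last]
        exact Odd.neg_one_pow ⟨m, by ring⟩
      have hsign2 : ((-1 : ℝ)) ^ (((Fin.last (m + 1)) : ℕ) + ((Fin.last (m + 1)) : ℕ))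
          = 1 := by
        rw [Fin.val_last]
        exact Even.neg_one_pow ⟨m + 1, by ring⟩
      rw [Finset.sum_eq_zero (fun q _ => by rw [hB0 q, mul_zero, zero_mul]),
        hmid, hlastE, hS1, hS2, hsign1, hsign2]
      ring
    -- conclusion
    show Qmin n (Phi l hl1 hln t x) j (m + 1) i
        = Qmin n x j (m + 1 + 1) (Fin.snoc i 1) * t + Qmin n x j (m + 1) i
    rw [hdet1, hQ']
    have hQM : Qmin n x j (m + 1) i = M.det := rfl
    rw [hQM]; ring
  · intro hk
    subst hk
    have hjn : j ≤ n := by omega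
    rw [Qmin, Matrix.det_fin_one]
    simp only [Matrix.of_apply, Fin.val_zero, Nat.add_zero]
    exact Tmat_pos x hj1 le_rfl hjn
end

section
/- (sl₂ case.) Fix μ ∈ ℝ and a nonzero real z. Define operators on smooth functions of one real variable x by (T_1(τ)ψ)(x) = (1 + xτ)^{μ} ψ(x/(1 + xτ)) (on the domain 1 + xτ > 0) and (T_0(τ)ψ)(x) = ψ(x + τ/z). Let l ≥ 1 and take the alternating word m_s = 1 for s odd, m_s = 0 for s even. Then, on the open domain of (x, t_1, …, t_l) where every prefactor arising in the composition and the quantity P below are positive, T_{m_l}(t_l) ∘ ⋯ ∘ T_{m_1}(t_1) applied to the constant function 1 equals P(x, z; t_1,…,t_l)^{μ}, where P = Σ_{r=0}^{l} z^{−⌊r/2⌋} x^{r mod 2} c_r(t), with c_0 = 1 and c_r(t) = Σ t_{p_1}⋯t_{p_r}, the sum over all 1 ≤ p_1 < p_2 < ⋯ < p_r ≤ l with p_s odd for s odd and p_s even for s even. -/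
open scoped Classical

/-- Composition `T_{c_1}(s_1) ∘ T_{c_2}(s_2) ∘ ⋯` (head of the list is the outermost
operator) applied to the constant function `1`, for the sl₂ operators
`(T_1(τ)ψ)(x) = (1+xτ)^μ ψ(x/(1+xτ))` and `(T_0(τ)ψ)(x) = ψ(x + τ/z)`. -/
noncomputable def comp2 (μ z : ℝ) : List (ℕ × ℝ) → ℝ → ℝ
  | [], _ => 1
  | (c, s) :: rest, x =>
      if c = 1 then (1 + x * s) ^ μ * comp2 μ z rest (x / (1 + x * s))
      else comp2 μ z rest (x + s / z)

/-- Positivity of every prefactor `1 + xτ` arising in the composition. -/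
def good2 (z : ℝ) : List (ℕ × ℝ) → ℝ → Prop
  | [], _ => True
  | (c, s) :: rest, x =>
      if c = 1 then 0 < 1 + x * s ∧ good2 z rest (x / (1 + x * s))
      else good2 z rest (x + s / z)

/-- `c_r(t) = Σ t_{p_1}⋯t_{p_r}`, summed over `1 ≤ p_1 < ⋯ < p_r ≤ l` with `p_s` odd for
`s` odd and `p_s` even for `s` even (indices written 1-based). -/
noncomputable def ccoef (l r : ℕ) (t : Fin l → ℝ) : ℝ :=
  ∑ p ∈ Finset.univ.filter (fun p : Fin r → Fin l =>
      StrictMono p ∧ ∀ a, ((p a : ℕ) + 1) % 2 = ((a : ℕ) + 1) % 2),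
    ∏ a, t (p a)

/-- `P(x,z;t) = Σ_{r=0}^{l} z^{−⌊r/2⌋} x^{r mod 2} c_r(t)`. -/
noncomputable def Psl2 (l : ℕ) (x z : ℝ) (t : Fin l → ℝ) : ℝ :=
  ∑ r ∈ Finset.range (l + 1), (z ^ (r / 2))⁻¹ * x ^ (r % 2) * ccoef l r t

lemma ccoef_zero (l : ℕ) (t : Fin l → ℝ) : ccoef l 0 t = 1 := by
  unfold ccoef
  rw [Finset.filter_true_of_mem]
  · simp [Finset.card_univ]
  · intro p _
    exact ⟨fun a => a.elim0, fun a => a.elim0⟩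

lemma ccoef_of_lt (l r : ℕ) (t : Fin l → ℝ) (h : l < r) : ccoef l r t = 0 := by
  unfold ccoef
  rw [Finset.filter_false_of_mem, Finset.sum_empty]
  intro p _ hp
  have := Fintype.card_le_of_injective p hp.1.injective
  simp at this; omega

lemma ccoef_succ (l q : ℕ) (t : Fin (l + 1) → ℝ) :
    ccoef (l + 1) (q + 1) t =
      ccoef l (q + 1) (fun a => t a.castSucc) +
      (if (l + 1) % 2 = (q + 1) % 2 then
        t (Fin.last l) * ccoef l q (fun a => t a.castSucc) else 0) := by
  classical
  unfold ccoef
  rw [← Finset.sum_filter_add_sum_filter_not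
      (Finset.univ.filter (fun p : Fin (q+1) → Fin (l+1) =>
        StrictMono p ∧ ∀ a, ((p a : ℕ) + 1) % 2 = ((a : ℕ) + 1) % 2))
      (fun p => p (Fin.last q) = Fin.last l)]
  rw [add_comm]
  congr 1
  · -- part 1 : p (last q) ≠ last l  ↦  ccoef l (q+1)
    have h1 : ((Finset.univ.filter (fun p : Fin (q+1) → Fin (l+1) =>
        StrictMono p ∧ ∀ a, ((p a : ℕ) + 1) % 2 = ((a : ℕ) + 1) % 2)).filter
        (fun p => ¬ p (Fin.last q) = Fin.last l)) =
        (Finset.univ.filter (fun p : Fin (q+1) → Fin l =>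
          StrictMono p ∧ ∀ a, ((p a : ℕ) + 1) % 2 = ((a : ℕ) + 1) % 2)).image
          (fun p' (a : Fin (q+1)) => (p' a).castSucc) := by
      ext p
      simp only [Finset.mem_filter, Finset.mem_image, Finset.mem_univ, true_and]
      constructor
      · rintro ⟨⟨hmono, hpar⟩, hne⟩
        have hlast : p (Fin.last q) < Fin.last l :=
          lt_of_le_of_ne (Fin.le_last _) hne
        have hlt : ∀ a, (p a : ℕ) < l := by
          intro a
          have := hmono.monotone (Fin.le_last a)
          have h2 : p a < Fin.last l := lt_of_le_of_lt this hlast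
          simpa [Fin.lt_def] using h2
        refine ⟨fun a => ⟨(p a : ℕ), hlt a⟩, ⟨?_, ?_⟩, ?_⟩
        · intro a b hab
          exact hmono hab
        · intro a; simpa using hpar a
        · funext a; exact rfl
      · rintro ⟨p', ⟨hmono, hpar⟩, rfl⟩
        refine ⟨⟨?_, ?_⟩, ?_⟩
        · exact fun a b hab => Fin.castSucc_lt_castSucc_iff.mpr (hmono hab)
        · intro a; simpa using hpar a
        · intro h
          have := congrArg Fin.val h
          simp [Fin.lt_def] at this
          have := (p' (Fin.last q)).isLt
          omega
    rw [h1, Finset.sum_image]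
    intro p1 _ p2 _ h
    funext a
    have := congrFun h a
    exact Fin.castSucc_injective _ this
  · -- part 2 : p (last q) = last l
    by_cases hpar : (l + 1) % 2 = (q + 1) % 2
    · rw [if_pos hpar]
      have h2 : ((Finset.univ.filter (fun p : Fin (q+1) → Fin (l+1) =>
          StrictMono p ∧ ∀ a, ((p a : ℕ) + 1) % 2 = ((a : ℕ) + 1) % 2)).filter
          (fun p => p (Fin.last q) = Fin.last l)) =
          (Finset.univ.filter (fun p : Fin q → Fin l =>
            StrictMono p ∧ ∀ a, ((p a : ℕ) + 1) % 2 = ((a : ℕ) + 1) % 2)).image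
            (fun p' => Fin.snoc (fun a => (p' a).castSucc) (Fin.last l)) := by
        ext p
        simp only [Finset.mem_filter, Finset.mem_image, Finset.mem_univ, true_and]
        constructor
        · rintro ⟨⟨hmono, hparp⟩, hlast⟩
          have hlt : ∀ a : Fin q, (p a.castSucc : ℕ) < l := by
            intro a
            have h3 : p a.castSucc < p (Fin.last q) := hmono (Fin.castSucc_lt_last a)
            rw [hlast] at h3
            simpa [Fin.lt_def] using h3
          refine ⟨fun a => ⟨(p a.castSucc : ℕ), hlt a⟩, ⟨?_, ?_⟩, ?_⟩
          · intro a b hab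
            exact hmono (Fin.castSucc_lt_castSucc_iff.mpr hab)
          · intro a; simpa using hparp a.castSucc
          · funext a
            refine Fin.lastCases ?_ (fun b => ?_) a
            · simp [Fin.snoc_last, hlast]
            · simp only [Fin.snoc_castSucc]
              exact rfl
        · rintro ⟨p', ⟨hmono, hparp⟩, rfl⟩
          refine ⟨⟨?_, ?_⟩, ?_⟩
          · intro a b hab
            refine Fin.lastCases ?_ (fun b' hab => ?_) b hab
            · intro hab
              have ha : a ≠ Fin.last q := ne_of_lt hab
              obtain ⟨a', rfl⟩ := Fin.exists_castSucc_eq.mpr ha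
              simp [Fin.snoc_castSucc, Fin.snoc_last]
            · have ha : a ≠ Fin.last q := by
                intro h; rw [h] at hab
                exact absurd hab (not_lt.mpr (Fin.le_last _))
              obtain ⟨a', rfl⟩ := Fin.exists_castSucc_eq.mpr ha
              simp only [Fin.snoc_castSucc]
              have : a' < b' := by
                have := hab
                rwa [Fin.castSucc_lt_castSucc_iff] at this
              exact Fin.castSucc_lt_castSucc_iff.mpr (hmono this)
          · intro a
            refine Fin.lastCases ?_ (fun b => ?_) a
            · simpa [Fin.snoc_last] using hpar
            · simpa [Fin.snoc_castSucc] using hparp b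
          · simp [Fin.snoc_last]
      rw [h2, Finset.sum_image]
      · rw [Finset.mul_sum]
        apply Finset.sum_congr rfl
        intro p' _
        rw [Fin.prod_univ_castSucc]
        simp [Fin.snoc_castSucc, Fin.snoc_last, mul_comm]
      · intro p1 h1' p2 h2' h
        funext a
        have := congrFun h a.castSucc
        simp only [Fin.snoc_castSucc] at this
        exact Fin.castSucc_injective _ this
    · rw [if_neg hpar]
      rw [Finset.filter_false_of_mem, Finset.sum_empty]
      rintro p hp h
      obtain ⟨-, ⟨hmono, hparp⟩⟩ := Finset.mem_filter.mp hp
      have := hparp (Fin.last q)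
      rw [h] at this
      simp [Fin.val_last] at this
      exact hpar this

lemma Psl2_zero (x z : ℝ) (t : Fin 0 → ℝ) : Psl2 0 x z t = 1 := by
  unfold Psl2
  rw [Finset.sum_range_one, ccoef_zero]
  norm_num

lemma Psl2_sum_split (k : ℕ) (x z : ℝ) (t : Fin (k + 1) → ℝ) :
    Psl2 (k + 1) x z t =
      (∑ r ∈ Finset.range (k + 1),
        (z ^ (r / 2))⁻¹ * x ^ (r % 2) * ccoef k r (fun a => t a.castSucc))
      + ∑ r ∈ Finset.range (k + 1),
          (if (k + 1) % 2 = (r + 1) % 2 then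
            (z ^ ((r + 1) / 2))⁻¹ * x ^ ((r + 1) % 2)
              * (t (Fin.last k) * ccoef k r (fun a => t a.castSucc)) else 0) := by
  unfold Psl2
  rw [Finset.sum_range_succ']
  simp only [ccoef_succ, mul_add, mul_ite, mul_zero]
  rw [Finset.sum_add_distrib, ccoef_zero]
  have S1 : (∑ r ∈ Finset.range (k + 1),
        (z ^ ((r + 1) / 2))⁻¹ * x ^ ((r + 1) % 2) * ccoef k (r + 1) (fun a => t a.castSucc))
      + (z ^ (0 / 2))⁻¹ * x ^ (0 % 2) * 1
      = ∑ r ∈ Finset.range (k + 1),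
          (z ^ (r / 2))⁻¹ * x ^ (r % 2) * ccoef k r (fun a => t a.castSucc) := by
    rw [← ccoef_zero k (fun a => t a.castSucc)]
    rw [← Finset.sum_range_succ'
      (fun r => (z ^ (r / 2))⁻¹ * x ^ (r % 2) * ccoef k r (fun a => t a.castSucc)) (k + 1)]
    rw [Finset.sum_range_succ, ccoef_of_lt k (k + 1) _ (lt_add_one k), mul_zero, add_zero]
  rw [add_right_comm, S1]

lemma Psl2_succ_odd (k : ℕ) (hk : (k + 1) % 2 = 1) (x z : ℝ) (t : Fin (k + 1) → ℝ)
    (h : (1 : ℝ) + x * t (Fin.last k) ≠ 0) :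
    Psl2 (k + 1) x z t =
      (1 + x * t (Fin.last k)) *
        Psl2 k (x / (1 + x * t (Fin.last k))) z (fun a => t a.castSucc) := by
  rw [Psl2_sum_split]
  unfold Psl2
  rw [Finset.mul_sum, ← Finset.sum_add_distrib]
  apply Finset.sum_congr rfl
  intro r _
  rcases Nat.mod_two_eq_zero_or_one r with h0 | h1
  · rw [if_pos (by omega), show (r + 1) / 2 = r / 2 by omega,
      show (r + 1) % 2 = 1 by omega, h0, pow_zero, pow_one]
    ring
  · rw [if_neg (by omega), h1, pow_one, add_zero, div_eq_mul_inv]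
    have hinv : (1 + x * t (Fin.last k)) * (1 + x * t (Fin.last k))⁻¹ = 1 :=
      mul_inv_cancel₀ h
    linear_combination (-((z ^ (r / 2))⁻¹ * x * ccoef k r fun a => t a.castSucc)) * hinv

lemma Psl2_succ_even (k : ℕ) (hk : (k + 1) % 2 = 0) (x z : ℝ) (hz : z ≠ 0)
    (t : Fin (k + 1) → ℝ) :
    Psl2 (k + 1) x z t =
      Psl2 k (x + t (Fin.last k) / z) z (fun a => t a.castSucc) := by
  rw [Psl2_sum_split]
  unfold Psl2
  rw [← Finset.sum_add_distrib]
  apply Finset.sum_congr rfl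
  intro r _
  rcases Nat.mod_two_eq_zero_or_one r with h0 | h1
  · rw [if_neg (by omega), h0, pow_zero, add_zero]
    norm_num
  · rw [if_pos (by omega), show (r + 1) / 2 = r / 2 + 1 by omega,
      show (r + 1) % 2 = 0 by omega, h1, pow_zero, pow_one, pow_succ]
    field_simp

lemma main_aux (μ z : ℝ) (hz : z ≠ 0) : ∀ (l : ℕ) (t : Fin l → ℝ) (x : ℝ),
    good2 z ((List.ofFn fun a : Fin l =>
      ((if ((a : ℕ) + 1) % 2 = 1 then 1 else 0 : ℕ), t a)).reverse) x →
    0 < Psl2 l x z t →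
    comp2 μ z ((List.ofFn fun a : Fin l =>
      ((if ((a : ℕ) + 1) % 2 = 1 then 1 else 0 : ℕ), t a)).reverse) x
      = Psl2 l x z t ^ μ := by
  intro l
  induction l with
  | zero =>
      intro t x _ _
      rw [Psl2_zero, Real.one_rpow]
      simp [comp2]
  | succ k ih =>
      intro t x hg hP
      rw [List.ofFn_succ', List.concat_eq_append, List.reverse_append,
        List.reverse_singleton, List.singleton_append] at hg ⊢
      simp only [Fin.val_last, Fin.coe_castSucc] at hg ⊢
      rcases Nat.mod_two_eq_zero_or_one (k + 1) with hpar | hpar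
      · -- even: head operator is (0, t last)
        rw [if_neg (by omega)] at hg ⊢
        simp only [comp2, good2, if_neg (by norm_num : ¬ (0 : ℕ) = 1)] at hg ⊢
        rw [Psl2_succ_even k hpar x z hz t] at hP ⊢
        exact ih (fun a => t a.castSucc) _ hg hP
      · -- odd: head operator is (1, t last)
        rw [if_pos hpar] at hg ⊢
        simp only [comp2, good2, if_pos rfl] at hg ⊢
        obtain ⟨hpos, hg'⟩ := hg
        rw [Psl2_succ_odd k hpar x z t (ne_of_gt hpos)] at hP ⊢
        have hP' : 0 < Psl2 k (x / (1 + x * t (Fin.last k))) z (fun a => t a.castSucc) := by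
          nlinarith
        rw [ih (fun a => t a.castSucc) _ hg' hP']
        rw [← Real.mul_rpow (le_of_lt hpos) (le_of_lt hP')]
        simp

/-- sl₂ kernel formula: for the alternating word `m = (1,0,1,0,…)` of length `l`, on the
domain where all prefactors and `P` are positive,
`T_{m_l}(t_l) ∘ ⋯ ∘ T_{m_1}(t_1) 1 = P(x,z;t_1,…,t_l)^μ`. -/
theorem stmt11 (μ z : ℝ) (hz : z ≠ 0) (l : ℕ) (hl : 1 ≤ l)
    (m : Fin l → ℕ)
    (hm : ∀ a : Fin l, m a = if ((a : ℕ) + 1) % 2 = 1 then 1 else 0)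
    (t : Fin l → ℝ) (x : ℝ)
    (hgood : good2 z ((List.ofFn fun a : Fin l => (m a, t a)).reverse) x)
    (hP : 0 < Psl2 l x z t) :
    comp2 μ z ((List.ofFn fun a : Fin l => (m a, t a)).reverse) x =
      Psl2 l x z t ^ μ := by

  have hfn : (fun a : Fin l => (m a, t a)) =
      fun a : Fin l => ((if ((a : ℕ) + 1) % 2 = 1 then 1 else 0 : ℕ), t a) := by
    funext a; rw [hm a]
  rw [hfn] at hgood ⊢
  exact main_aux μ z hz l t x hgood hP
end

section
/- (sl₃ case.) Fix μ_1, μ_2 ∈ ℝ and a nonzero real z. Define operators on smooth functions of three real variables (x_{11}, x_{12}, x_{22}) by: (T_1(τ)ψ)(x_{11},x_{12},x_{22}) = (1+x_{11}τ)^{μ_1} ψ(x_{11}/(1+x_{11}τ), x_{12}, x_{12}τ + x_{22}); (T_2(τ)ψ)(x_{11},x_{12},x_{22}) = (1+x_{22}τ)^{μ_2} ψ(−(x_{12} − x_{11}x_{22})τ + x_{11}, x_{12}/(1+x_{22}τ), x_{22}/(1+x_{22}τ)); (T_0(τ)ψ)(x_{11},x_{12},x_{22}) = ψ(x_{11}, x_{12}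 + τ/z, x_{22}). Then for every l ≥ 1, every word m = (m_1,…,m_l) ∈ {0,1,2}^l, on the open domain where all prefactors arising in the composition and the quantities P^1, P^2 below are positive: T_{m_l}(t_l) ∘ ⋯ ∘ T_{m_1}(t_1) applied to the constant function 1 equals (P^1)^{μ_1}·(P^2)^{μ_2}, where P^j = Σ_{l′=0}^{l} A^j_{l′} f^j_{l′}(t) with f^j_{l′}(t) = Σ_{1 ≤ p_1 < ⋯ < p_{l′} ≤ l, m_{p_s} ≡ j·s (mod 3)} t_{p_1}⋯t_{p_{l′}} (f^j_0 = 1), and A^1_{3q} = (−z)^{−q}, A^1_{3q+1} = (−z)^{−q}x_{11}, A^1_{3q+2} = (−z)^{−q}(x_{11}x_{22} − x_{12}), A^2_{3q} = z^{−q}, A^2_{3q+1} = z^{−q}x_{22}, A^2_{3q+2} = z^{−q}x_{12}. -/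
open scoped Classical

/-- Composition `T_{c_1}(s_1) ∘ T_{c_2}(s_2) ∘ ⋯` (head of the list is the outermost
operator) applied to the constant function `1`, for the sl₃ operators on functions of
`(x₁₁, x₁₂, x₂₂)`:
`(T_1(τ)ψ)(x₁₁,x₁₂,x₂₂) = (1+x₁₁τ)^{μ₁} ψ(x₁₁/(1+x₁₁τ), x₁₂, x₁₂τ+x₂₂)`,
`(T_2(τ)ψ)(x₁₁,x₁₂,x₂₂) = (1+x₂₂τ)^{μ₂} ψ(−(x₁₂−x₁₁x₂₂)τ+x₁₁, x₁₂/(1+x₂₂τ), x₂₂/(1+x₂₂τ))`,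
`(T_0(τ)ψ)(x₁₁,x₁₂,x₂₂) = ψ(x₁₁, x₁₂+τ/z, x₂₂)`. -/
noncomputable def comp3 (μ1 μ2 z : ℝ) : List (ℕ × ℝ) → ℝ × ℝ × ℝ → ℝ
  | [], _ => 1
  | (c, s) :: rest, (a, b, d) =>
      if c = 1 then
        (1 + a * s) ^ μ1 * comp3 μ1 μ2 z rest (a / (1 + a * s), b, b * s + d)
      else if c = 2 then
        (1 + d * s) ^ μ2 *
          comp3 μ1 μ2 z rest (-(b - a * d) * s + a, b / (1 + d * s), d / (1 + d * s))
      else comp3 μ1 μ2 z rest (a, b + s / z, d)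

/-- Positivity of every prefactor arising in the composition. -/
def good3 (z : ℝ) : List (ℕ × ℝ) → ℝ × ℝ × ℝ → Prop
  | [], _ => True
  | (c, s) :: rest, (a, b, d) =>
      if c = 1 then 0 < 1 + a * s ∧ good3 z rest (a / (1 + a * s), b, b * s + d)
      else if c = 2 then 0 < 1 + d * s ∧
        good3 z rest (-(b - a * d) * s + a, b / (1 + d * s), d / (1 + d * s))
      else good3 z rest (a, b + s / z, d)

/-- `f^j_{l′}(t) = Σ t_{p_1}⋯t_{p_{l′}}`, summed over `1 ≤ p_1 < ⋯ < p_{l′} ≤ l` with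
`m_{p_s} ≡ j·s (mod 3)` (1-based `s`); `f^j_0 = 1`. -/
noncomputable def fcoef (l : ℕ) (m : Fin l → ℕ) (j l' : ℕ) (t : Fin l → ℝ) : ℝ :=
  ∑ p ∈ Finset.univ.filter (fun p : Fin l' → Fin l =>
      StrictMono p ∧ ∀ a, m (p a) % 3 = (j * ((a : ℕ) + 1)) % 3),
    ∏ a, t (p a)

/-- `A^1_{3q} = (−z)^{−q}`, `A^1_{3q+1} = (−z)^{−q}x₁₁`, `A^1_{3q+2} = (−z)^{−q}(x₁₁x₂₂−x₁₂)`. -/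
noncomputable def Acoef1 (x11 x12 x22 z : ℝ) (l' : ℕ) : ℝ :=
  ((-z) ^ (l' / 3))⁻¹ *
    (if l' % 3 = 0 then 1 else if l' % 3 = 1 then x11 else x11 * x22 - x12)

/-- `A^2_{3q} = z^{−q}`, `A^2_{3q+1} = z^{−q}x₂₂`, `A^2_{3q+2} = z^{−q}x₁₂`. -/
noncomputable def Acoef2 (x11 x12 x22 z : ℝ) (l' : ℕ) : ℝ :=
  (z ^ (l' / 3))⁻¹ * (if l' % 3 = 0 then 1 else if l' % 3 = 1 then x22 else x12)

/-- `P^j = Σ_{l′=0}^{l} A^j_{l′} f^j_{l′}(t)` for `j = 1, 2`. -/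
noncomputable def Psl3 (l : ℕ) (m : Fin l → ℕ) (t : Fin l → ℝ)
    (x11 x12 x22 z : ℝ) (j : ℕ) : ℝ :=
  ∑ l' ∈ Finset.range (l + 1),
    (if j = 1 then Acoef1 x11 x12 x22 z l' else Acoef2 x11 x12 x22 z l') *
      fcoef l m j l' t

lemma fcoef_zero (l : ℕ) (m : Fin l → ℕ) (j : ℕ) (t : Fin l → ℝ) :
    fcoef l m j 0 t = 1 := by
  rw [fcoef]
  rw [Finset.filter_true_of_mem (fun p _ => ⟨fun a => a.elim0, fun a => a.elim0⟩)]
  simp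

lemma fcoef_big (l : ℕ) (m : Fin l → ℕ) (j l' : ℕ) (hl : l < l') (t : Fin l → ℝ) :
    fcoef l m j l' t = 0 := by
  rw [fcoef]
  convert Finset.sum_empty
  rw [Finset.filter_eq_empty_iff]
  rintro p - ⟨hsm, -⟩
  have := Fintype.card_le_of_injective p hsm.injective
  simp at this
  omega

set_option maxRecDepth 10000

lemma fcoef_succ (l : ℕ) (m : Fin (l+1) → ℕ) (j k : ℕ) (t : Fin (l+1) → ℝ) :
    fcoef (l+1) m j (k+1) t =
      fcoef l (m ∘ Fin.castSucc) j (k+1) (t ∘ Fin.castSucc) +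
      (if m (Fin.last l) % 3 = (j * (k+1)) % 3
        then t (Fin.last l) * fcoef l (m ∘ Fin.castSucc) j k (t ∘ Fin.castSucc) else 0) := by
  rw [fcoef]
  rw [← Finset.sum_filter_add_sum_filter_not _
    (fun p : Fin (k+1) → Fin (l+1) => p (Fin.last k) ≠ Fin.last l)]
  congr 1
  · -- not hitting last
    rw [fcoef]
    refine Finset.sum_bij'
      (i := fun (p : Fin (k+1) → Fin (l+1)) hp => fun (a : Fin (k+1)) => Fin.castPred (p a) ?_)
      (j := fun (q : Fin (k+1) → Fin l) hq => fun a => Fin.castSucc (q a)) ?_ ?_ ?_ ?_ ?_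
    · simp only [Finset.mem_filter, Finset.mem_univ, true_and] at hp
      obtain ⟨⟨hsm, hcol⟩, hne⟩ := hp
      intro h
      exact hne (le_antisymm (Fin.le_last _) (h ▸ hsm.monotone (Fin.le_last a)))
    · -- membership forward
      intro p hp
      simp only [Finset.mem_filter, Finset.mem_univ, true_and] at hp ⊢
      obtain ⟨⟨hsm, hcol⟩, hne⟩ := hp
      constructor
      · intro x y hxy
        have h1 : (p x : ℕ) < (p y : ℕ) := hsm hxy
        simp only [Fin.lt_def, Fin.coe_castPred]
        exact h1
      · intro a
        simp only [Function.comp_apply, Fin.castSucc_castPred]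
        exact hcol a
    · -- membership backward
      intro q hq
      simp only [Finset.mem_filter, Finset.mem_univ, true_and] at hq ⊢
      obtain ⟨hsm, hcol⟩ := hq
      refine ⟨⟨fun x y hxy => ?_, fun a => ?_⟩, ?_⟩
      · simp only [Fin.castSucc_lt_castSucc_iff]
        exact hsm hxy
      · exact hcol a
      · intro h
        exact absurd (congrArg Fin.val h)
          (by simp only [Fin.coe_castSucc, Fin.val_last]; exact (q (Fin.last k)).isLt.ne)
    · intro p hp; funext a; simp only [Fin.castSucc_castPred]
    · intro q hq; funext a; simp only [Fin.castPred_castSucc]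
    · intro p hp
      apply Finset.prod_congr rfl
      intro a _
      simp only [Function.comp_apply, Fin.castSucc_castPred]
  · -- hitting last
    simp only [not_not]
    by_cases hχ : m (Fin.last l) % 3 = (j * (k+1)) % 3
    · rw [if_pos hχ, fcoef, Finset.mul_sum]
      refine Finset.sum_bij'
        (i := fun (p : Fin (k+1) → Fin (l+1)) hp =>
          fun (a : Fin k) => Fin.castPred (p (Fin.castSucc a)) ?_)
        (j := fun (q : Fin k → Fin l) hq =>
          Fin.snoc (fun a => Fin.castSucc (q a)) (Fin.last l)) ?_ ?_ ?_ ?_ ?_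
      · -- p a.castSucc ≠ last
        simp only [Finset.mem_filter, Finset.mem_univ, true_and] at hp
        obtain ⟨⟨hsm, hcol⟩, hlast⟩ := hp
        have h2 := hsm (Fin.castSucc_lt_last a)
        rw [hlast] at h2
        exact h2.ne
      · -- membership forward
        intro p hp
        simp only [Finset.mem_filter, Finset.mem_univ, true_and] at hp ⊢
        obtain ⟨⟨hsm, hcol⟩, hlast⟩ := hp
        constructor
        · intro x y hxy
          have h1 : (p x.castSucc : ℕ) < (p y.castSucc : ℕ) :=
            hsm (by simpa only [Fin.castSucc_lt_castSucc_iff] using hxy)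
          simp only [Fin.lt_def, Fin.coe_castPred]
          exact h1
        · intro a
          have := hcol a.castSucc
          simp only [Function.comp_apply, Fin.castSucc_castPred, Fin.coe_castSucc]
          simpa only [Fin.coe_castSucc] using this
      · -- membership backward
        intro q hq
        simp only [Finset.mem_filter, Finset.mem_univ, true_and] at hq ⊢
        obtain ⟨hsm, hcol⟩ := hq
        refine ⟨⟨fun x y hxy => ?_, fun a => ?_⟩, ?_⟩
        · rcases Fin.eq_castSucc_or_eq_last y with ⟨y', rfl⟩ | rfl
          · rcases Fin.eq_castSucc_or_eq_last x with ⟨x', rfl⟩ | rfl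
            · simp only [Fin.snoc_castSucc]
              have hxy' : x' < y' := by
                simpa only [Fin.castSucc_lt_castSucc_iff] using hxy
              simp only [Fin.castSucc_lt_castSucc_iff]
              exact hsm hxy'
            · exact absurd hxy (by simp only [not_lt]; exact (Fin.castSucc_lt_last y').le)
          · rcases Fin.eq_castSucc_or_eq_last x with ⟨x', rfl⟩ | rfl
            · simp only [Fin.snoc_castSucc, Fin.snoc_last]
              exact Fin.castSucc_lt_last _
            · exact absurd hxy (lt_irrefl _)
        · rcases Fin.eq_castSucc_or_eq_last a with ⟨a', rfl⟩ | rfl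
          · simp only [Fin.snoc_castSucc]
            have := hcol a'
            simpa only [Function.comp_apply, Fin.coe_castSucc] using this
          · simp only [Fin.snoc_last, Fin.val_last]
            exact hχ
        · simp only [Fin.snoc_last]
      · -- left inverse
        intro p hp
        simp only [Finset.mem_filter, Finset.mem_univ, true_and] at hp
        funext a
        rcases Fin.eq_castSucc_or_eq_last a with ⟨a', rfl⟩ | rfl
        · simp only [Fin.snoc_castSucc, Fin.castSucc_castPred]
        · simp only [Fin.snoc_last]
          exact hp.2.symm
      · -- right inverse
        intro q hq
        funext a
        simp only [Fin.snoc_castSucc, Fin.castPred_castSucc]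
      · -- products
        intro p hp
        simp only [Finset.mem_filter, Finset.mem_univ, true_and] at hp
        rw [Fin.prod_univ_castSucc, show t (p (Fin.last k)) = t (Fin.last l) from congrArg t hp.2, mul_comm]
        congr 1
    · rw [if_neg hχ]
      apply Finset.sum_eq_zero
      intro p hp
      simp only [Finset.mem_filter, Finset.mem_univ, true_and] at hp
      obtain ⟨⟨hsm, hcol⟩, hlast⟩ := hp
      exfalso
      apply hχ
      have := hcol (Fin.last k)
      rw [hlast] at this
      simpa only [Fin.val_last] using this

lemma psum_rec (l : ℕ) (m : Fin (l+1) → ℕ) (j : ℕ) (t : Fin (l+1) → ℝ)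
    (A A' : ℕ → ℝ) (pref : ℝ)
    (hA : ∀ l', pref * A' l' = A l' +
      (if m (Fin.last l) % 3 = (j * (l'+1)) % 3 then t (Fin.last l) * A (l'+1) else 0)) :
    pref * ∑ l' ∈ Finset.range (l+1),
        A' l' * fcoef l (m ∘ Fin.castSucc) j l' (t ∘ Fin.castSucc)
      = ∑ l' ∈ Finset.range (l+2), A l' * fcoef (l+1) m j l' t := by
  rw [Finset.mul_sum]
  have lhs_eq : ∀ l' ∈ Finset.range (l+1),
      pref * (A' l' * fcoef l (m ∘ Fin.castSucc) j l' (t ∘ Fin.castSucc))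
      = A l' * fcoef l (m ∘ Fin.castSucc) j l' (t ∘ Fin.castSucc)
        + (if m (Fin.last l) % 3 = (j * (l'+1)) % 3
            then t (Fin.last l) * (A (l'+1) * fcoef l (m ∘ Fin.castSucc) j l' (t ∘ Fin.castSucc))
            else 0) := by
    intro l' _
    rw [← mul_assoc, hA l']
    split <;> ring
  rw [Finset.sum_congr rfl lhs_eq, Finset.sum_add_distrib]
  -- RHS
  rw [Finset.sum_range_succ' (fun l' => A l' * fcoef (l+1) m j l' t) (l+1)]
  have rhs_eq : ∀ k ∈ Finset.range (l+1),
      A (k+1) * fcoef (l+1) m j (k+1) t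
      = A (k+1) * fcoef l (m ∘ Fin.castSucc) j (k+1) (t ∘ Fin.castSucc)
        + (if m (Fin.last l) % 3 = (j * (k+1)) % 3
            then t (Fin.last l) * (A (k+1) * fcoef l (m ∘ Fin.castSucc) j k (t ∘ Fin.castSucc))
            else 0) := by
    intro k _
    rw [fcoef_succ]
    split <;> ring
  rw [Finset.sum_congr rfl rhs_eq, Finset.sum_add_distrib]
  rw [fcoef_zero]
  -- now rearrange: LHS = S₁ + S₂ ; RHS = (T₁ + T₂) + A 0 * 1
  have e1 : ∑ l' ∈ Finset.range (l+1),
        A l' * fcoef l (m ∘ Fin.castSucc) j l' (t ∘ Fin.castSucc)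
      = (∑ k ∈ Finset.range (l+1),
          A (k+1) * fcoef l (m ∘ Fin.castSucc) j (k+1) (t ∘ Fin.castSucc)) + A 0 * 1 := by
    rw [Finset.sum_range_succ
      (fun k => A (k+1) * fcoef l (m ∘ Fin.castSucc) j (k+1) (t ∘ Fin.castSucc)) l]
    rw [fcoef_big l _ j (l+1) (by omega), mul_zero, add_zero]
    rw [Finset.sum_range_succ' (fun l' =>
      A l' * fcoef l (m ∘ Fin.castSucc) j l' (t ∘ Fin.castSucc)) l]
    rw [fcoef_zero]
  have e2 : ∑ l' ∈ Finset.range (l+1),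
        (if m (Fin.last l) % 3 = (j * (l'+1)) % 3
          then t (Fin.last l) * (A (l'+1) * fcoef l (m ∘ Fin.castSucc) j l' (t ∘ Fin.castSucc))
          else 0)
      = ∑ k ∈ Finset.range (l+1),
        (if m (Fin.last l) % 3 = (j * (k+1)) % 3
          then t (Fin.last l) * (A (k+1) * fcoef l (m ∘ Fin.castSucc) j k (t ∘ Fin.castSucc))
          else 0) := rfl
  rw [e1, e2]
  ring

private lemma split3 (l' : ℕ) : ∃ q r, r < 3 ∧ l' = 3*q + r := ⟨l'/3, l'%3, by omega, by omega⟩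

lemma hA_c1_j1 (a b d z s : ℝ) (hz : z ≠ 0) (h : 1 + a*s ≠ 0) (l' : ℕ) :
    (1+a*s) * Acoef1 (a/(1+a*s)) b (b*s+d) z l' =
      Acoef1 a b d z l' + (if 1 % 3 = (1*(l'+1)) % 3 then s * Acoef1 a b d z (l'+1) else 0) := by
  have hz' : (-z) ≠ 0 := neg_ne_zero.mpr hz
  obtain ⟨q, r, hr, rfl⟩ := split3 l'
  have hzq : (-z)^q ≠ 0 := pow_ne_zero _ hz'
  interval_cases r
  · have e1 : (3*q+0) % 3 = 0 := by omega
    have e2 : (3*q+0) / 3 = q := by omega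
    have e3 : (3*q+0+1) % 3 = 1 := by omega
    have e4 : (3*q+0+1) / 3 = q := by omega
    have e5 : (1*(3*q+0+1)) % 3 = 1 := by omega
    simp only [Acoef1, e1, e2, e3, e4, e5]
    norm_num
    field_simp
  · have e1 : (3*q+1) % 3 = 1 := by omega
    have e2 : (3*q+1) / 3 = q := by omega
    have e5 : (1*(3*q+1+1)) % 3 = 2 := by omega
    simp only [Acoef1, e1, e2, e5]
    norm_num
    field_simp
  · have e1 : (3*q+2) % 3 = 2 := by omega
    have e2 : (3*q+2) / 3 = q := by omega
    have e5 : (1*(3*q+2+1)) % 3 = 0 := by omega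
    simp only [Acoef1, e1, e2, e5]
    norm_num
    field_simp
    ring

lemma hA_c1_j2 (a b d z s : ℝ) (l' : ℕ) :
    (1:ℝ) * Acoef2 (a/(1+a*s)) b (b*s+d) z l' =
      Acoef2 a b d z l' + (if 1 % 3 = (2*(l'+1)) % 3 then s * Acoef2 a b d z (l'+1) else 0) := by
  obtain ⟨q, r, hr, rfl⟩ := split3 l'
  interval_cases r
  · have e1 : (3*q+0) % 3 = 0 := by omega
    have e5 : (2*(3*q+0+1)) % 3 = 2 := by omega
    simp only [Acoef2, e1, e5]
    norm_num
  · have e1 : (3*q+1) % 3 = 1 := by omega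
    have e2 : (3*q+1) / 3 = q := by omega
    have e3 : (3*q+1+1) % 3 = 2 := by omega
    have e4 : (3*q+1+1) / 3 = q := by omega
    have e5 : (2*(3*q+1+1)) % 3 = 1 := by omega
    simp only [Acoef2, e1, e2, e3, e4, e5]
    norm_num
    ring
  · have e1 : (3*q+2) % 3 = 2 := by omega
    have e5 : (2*(3*q+2+1)) % 3 = 0 := by omega
    simp only [Acoef2, e1, e5]
    norm_num

lemma hA_c2_j1 (a b d z s : ℝ) (hz : z ≠ 0) (h : 1 + d*s ≠ 0) (l' : ℕ) :
    (1:ℝ) * Acoef1 (-(b - a*d)*s + a) (b/(1+d*s)) (d/(1+d*s)) z l' =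
      Acoef1 a b d z l' + (if 2 % 3 = (1*(l'+1)) % 3 then s * Acoef1 a b d z (l'+1) else 0) := by
  have hz' : (-z) ≠ 0 := neg_ne_zero.mpr hz
  obtain ⟨q, r, hr, rfl⟩ := split3 l'
  have hzq : (-z)^q ≠ 0 := pow_ne_zero _ hz'
  interval_cases r
  · have e1 : (3*q+0) % 3 = 0 := by omega
    have e5 : (1*(3*q+0+1)) % 3 = 1 := by omega
    simp only [Acoef1, e1, e5]
    norm_num
  · have e1 : (3*q+1) % 3 = 1 := by omega
    have e2 : (3*q+1) / 3 = q := by omega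
    have e3 : (3*q+1+1) % 3 = 2 := by omega
    have e4 : (3*q+1+1) / 3 = q := by omega
    have e5 : (1*(3*q+1+1)) % 3 = 2 := by omega
    simp only [Acoef1, e1, e2, e3, e4, e5]
    norm_num
    field_simp
    ring
  · have e1 : (3*q+2) % 3 = 2 := by omega
    have e2 : (3*q+2) / 3 = q := by omega
    have e5 : (1*(3*q+2+1)) % 3 = 0 := by omega
    simp only [Acoef1, e1, e2, e5]
    norm_num
    field_simp
    left
    ring

lemma hA_c2_j2 (a b d z s : ℝ) (hz : z ≠ 0) (h : 1 + d*s ≠ 0) (l' : ℕ) :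
    (1+d*s) * Acoef2 (-(b - a*d)*s + a) (b/(1+d*s)) (d/(1+d*s)) z l' =
      Acoef2 a b d z l' + (if 2 % 3 = (2*(l'+1)) % 3 then s * Acoef2 a b d z (l'+1) else 0) := by
  obtain ⟨q, r, hr, rfl⟩ := split3 l'
  have hzq : z^q ≠ 0 := pow_ne_zero _ hz
  interval_cases r
  · have e1 : (3*q+0) % 3 = 0 := by omega
    have e2 : (3*q+0) / 3 = q := by omega
    have e3 : (3*q+0+1) % 3 = 1 := by omega
    have e4 : (3*q+0+1) / 3 = q := by omega
    have e5 : (2*(3*q+0+1)) % 3 = 2 := by omega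
    simp only [Acoef2, e1, e2, e3, e4, e5]
    norm_num
    field_simp
  · have e1 : (3*q+1) % 3 = 1 := by omega
    have e2 : (3*q+1) / 3 = q := by omega
    have e5 : (2*(3*q+1+1)) % 3 = 1 := by omega
    simp only [Acoef2, e1, e2, e5]
    norm_num
    field_simp
  · have e1 : (3*q+2) % 3 = 2 := by omega
    have e2 : (3*q+2) / 3 = q := by omega
    have e5 : (2*(3*q+2+1)) % 3 = 0 := by omega
    simp only [Acoef2, e1, e2, e5]
    norm_num
    field_simp

lemma hA_c0_j1 (a b d z s : ℝ) (hz : z ≠ 0) (l' : ℕ) :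
    (1:ℝ) * Acoef1 a (b + s/z) d z l' =
      Acoef1 a b d z l' + (if 0 % 3 = (1*(l'+1)) % 3 then s * Acoef1 a b d z (l'+1) else 0) := by
  have hz' : (-z) ≠ 0 := neg_ne_zero.mpr hz
  obtain ⟨q, r, hr, rfl⟩ := split3 l'
  have hzq : (-z)^q ≠ 0 := pow_ne_zero _ hz'
  interval_cases r
  · have e1 : (3*q+0) % 3 = 0 := by omega
    have e5 : (1*(3*q+0+1)) % 3 = 1 := by omega
    simp only [Acoef1, e1, e5]
    norm_num
  · have e1 : (3*q+1) % 3 = 1 := by omega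
    have e5 : (1*(3*q+1+1)) % 3 = 2 := by omega
    simp only [Acoef1, e1, e5]
    norm_num
  · have e1 : (3*q+2) % 3 = 2 := by omega
    have e2 : (3*q+2) / 3 = q := by omega
    have e3 : (3*q+2+1) % 3 = 0 := by omega
    have e4 : (3*q+2+1) / 3 = q+1 := by omega
    have e5 : (1*(3*q+2+1)) % 3 = 0 := by omega
    simp only [Acoef1, e1, e2, e3, e4, e5]
    norm_num
    field_simp
    ring

lemma hA_c0_j2 (a b d z s : ℝ) (hz : z ≠ 0) (l' : ℕ) :
    (1:ℝ) * Acoef2 a (b + s/z) d z l' =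
      Acoef2 a b d z l' + (if 0 % 3 = (2*(l'+1)) % 3 then s * Acoef2 a b d z (l'+1) else 0) := by
  obtain ⟨q, r, hr, rfl⟩ := split3 l'
  have hzq : z^q ≠ 0 := pow_ne_zero _ hz
  interval_cases r
  · have e1 : (3*q+0) % 3 = 0 := by omega
    have e5 : (2*(3*q+0+1)) % 3 = 2 := by omega
    simp only [Acoef2, e1, e5]
    norm_num
  · have e1 : (3*q+1) % 3 = 1 := by omega
    have e5 : (2*(3*q+1+1)) % 3 = 1 := by omega
    simp only [Acoef2, e1, e5]
    norm_num
  · have e1 : (3*q+2) % 3 = 2 := by omega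
    have e2 : (3*q+2) / 3 = q := by omega
    have e3 : (3*q+2+1) % 3 = 0 := by omega
    have e4 : (3*q+2+1) / 3 = q+1 := by omega
    have e5 : (2*(3*q+2+1)) % 3 = 0 := by omega
    simp only [Acoef2, e1, e2, e3, e4, e5]
    norm_num
    field_simp
    ring

lemma Psl3_zero (m : Fin 0 → ℕ) (t : Fin 0 → ℝ) (a b d z : ℝ) (j : ℕ) :
    Psl3 0 m t a b d z j = 1 := by
  rw [Psl3, Finset.sum_range_one, fcoef_zero]
  split <;> simp [Acoef1, Acoef2]

lemma main_ind (μ1 μ2 z : ℝ) (hz : z ≠ 0) : ∀ (l : ℕ) (m : Fin l → ℕ), (∀ i, m i ≤ 2) →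
    ∀ (t : Fin l → ℝ) (a b d : ℝ),
    good3 z ((List.ofFn fun i : Fin l => (m i, t i)).reverse) (a, b, d) →
    0 < Psl3 l m t a b d z 1 → 0 < Psl3 l m t a b d z 2 →
    comp3 μ1 μ2 z ((List.ofFn fun i : Fin l => (m i, t i)).reverse) (a, b, d) =
      Psl3 l m t a b d z 1 ^ μ1 * Psl3 l m t a b d z 2 ^ μ2 := by
  intro l
  induction l with
  | zero =>
    intro m hm t a b d hg h1 h2
    simp only [List.ofFn_zero, List.reverse_nil, comp3, Psl3_zero]
    rw [Real.one_rpow, Real.one_rpow, mul_one]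
  | succ l IH =>
    intro m hm t a b d hg h1 h2
    have hL : (List.ofFn fun i : Fin (l+1) => (m i, t i)).reverse
        = (m (Fin.last l), t (Fin.last l)) ::
          (List.ofFn fun i : Fin l => (m (Fin.castSucc i), t (Fin.castSucc i))).reverse := by
      rw [List.ofFn_succ', List.concat_eq_append, List.reverse_append]
      simp
    set m' : Fin l → ℕ := fun i => m (Fin.castSucc i) with hm'def
    set t' : Fin l → ℝ := fun i => t (Fin.castSucc i) with ht'def
    set s : ℝ := t (Fin.last l) with hsdef
    have hm2 : ∀ i, m' i ≤ 2 := fun i => hm _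
    rw [hL] at hg ⊢
    have hc3 : m (Fin.last l) = 0 ∨ m (Fin.last l) = 1 ∨ m (Fin.last l) = 2 := by
      have := hm (Fin.last l); omega
    rcases hc3 with hc | hc | hc
    · -- c = 0
      rw [hc] at hg ⊢
      simp only [comp3, good3] at hg ⊢
      rw [if_neg (by norm_num), if_neg (by norm_num)] at hg
      rw [if_neg (by norm_num : ¬(0 = 1)), if_neg (by norm_num : ¬(0 = 2))]
      have hA1 : ∀ l', (1:ℝ) * Acoef1 a (b + s/z) d z l' =
          Acoef1 a b d z l' + (if m (Fin.last l) % 3 = (1 * (l'+1)) % 3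
            then t (Fin.last l) * Acoef1 a b d z (l'+1) else 0) := by
        intro l'; rw [hc, ← hsdef]; exact hA_c0_j1 a b d z s hz l'
      have hA2 : ∀ l', (1:ℝ) * Acoef2 a (b + s/z) d z l' =
          Acoef2 a b d z l' + (if m (Fin.last l) % 3 = (2 * (l'+1)) % 3
            then t (Fin.last l) * Acoef2 a b d z (l'+1) else 0) := by
        intro l'; rw [hc, ← hsdef]; exact hA_c0_j2 a b d z s hz l'
      have R1 : Psl3 l m' t' a (b + s/z) d z 1 = Psl3 (l+1) m t a b d z 1 := by
        have := psum_rec l m 1 t (Acoef1 a b d z) (Acoef1 a (b + s/z) d z) 1 hA1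
        rw [one_mul] at this
        exact this
      have R2 : Psl3 l m' t' a (b + s/z) d z 2 = Psl3 (l+1) m t a b d z 2 := by
        have := psum_rec l m 2 t (Acoef2 a b d z) (Acoef2 a (b + s/z) d z) 1 hA2
        rw [one_mul] at this
        exact this
      rw [IH m' hm2 t' a (b + s/z) d hg (R1 ▸ h1) (R2 ▸ h2), R1, R2]
    · -- c = 1
      rw [hc] at hg ⊢
      simp only [comp3, good3, if_true, ite_true] at hg ⊢
      obtain ⟨hpos, hg'⟩ := hg
      have hne : (1 + a*s) ≠ 0 := hpos.ne'
      have hA1 : ∀ l', (1 + a*s) * Acoef1 (a/(1+a*s)) b (b*s+d) z l' =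
          Acoef1 a b d z l' + (if m (Fin.last l) % 3 = (1 * (l'+1)) % 3
            then t (Fin.last l) * Acoef1 a b d z (l'+1) else 0) := by
        intro l'; rw [hc, ← hsdef]; exact hA_c1_j1 a b d z s hz hne l'
      have hA2 : ∀ l', (1:ℝ) * Acoef2 (a/(1+a*s)) b (b*s+d) z l' =
          Acoef2 a b d z l' + (if m (Fin.last l) % 3 = (2 * (l'+1)) % 3
            then t (Fin.last l) * Acoef2 a b d z (l'+1) else 0) := by
        intro l'; rw [hc, ← hsdef]; exact hA_c1_j2 a b d z s l'
      have R1 : (1 + a*s) * Psl3 l m' t' (a/(1+a*s)) b (b*s+d) z 1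
          = Psl3 (l+1) m t a b d z 1 := by
        have := psum_rec l m 1 t (Acoef1 a b d z) (Acoef1 (a/(1+a*s)) b (b*s+d) z) (1+a*s) hA1
        exact this
      have R2 : Psl3 l m' t' (a/(1+a*s)) b (b*s+d) z 2 = Psl3 (l+1) m t a b d z 2 := by
        have := psum_rec l m 2 t (Acoef2 a b d z) (Acoef2 (a/(1+a*s)) b (b*s+d) z) 1 hA2
        rw [one_mul] at this
        exact this
      have hP1' : 0 < Psl3 l m' t' (a/(1+a*s)) b (b*s+d) z 1 := by
        rw [← R1] at h1
        by_contra hneg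
        push_neg at hneg
        nlinarith
      have hP2' : 0 < Psl3 l m' t' (a/(1+a*s)) b (b*s+d) z 2 := R2 ▸ h2
      rw [IH m' hm2 t' (a/(1+a*s)) b (b*s+d) hg' hP1' hP2', ← R1, ← R2]
      rw [Real.mul_rpow hpos.le hP1'.le]
      ring
    · -- c = 2
      rw [hc] at hg ⊢
      simp only [comp3, good3, if_true, ite_true] at hg ⊢
      rw [if_neg (by norm_num)] at hg
      rw [if_neg (by norm_num : ¬(2 = 1))]
      obtain ⟨hpos, hg'⟩ := hg
      have hne : (1 + d*s) ≠ 0 := hpos.ne'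
      have hA1 : ∀ l', (1:ℝ) * Acoef1 (-(b - a*d)*s + a) (b/(1+d*s)) (d/(1+d*s)) z l' =
          Acoef1 a b d z l' + (if m (Fin.last l) % 3 = (1 * (l'+1)) % 3
            then t (Fin.last l) * Acoef1 a b d z (l'+1) else 0) := by
        intro l'; rw [hc, ← hsdef]; exact hA_c2_j1 a b d z s hz hne l'
      have hA2 : ∀ l', (1 + d*s) * Acoef2 (-(b - a*d)*s + a) (b/(1+d*s)) (d/(1+d*s)) z l' =
          Acoef2 a b d z l' + (if m (Fin.last l) % 3 = (2 * (l'+1)) % 3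
            then t (Fin.last l) * Acoef2 a b d z (l'+1) else 0) := by
        intro l'; rw [hc, ← hsdef]; exact hA_c2_j2 a b d z s hz hne l'
      have R1 : Psl3 l m' t' (-(b - a*d)*s + a) (b/(1+d*s)) (d/(1+d*s)) z 1
          = Psl3 (l+1) m t a b d z 1 := by
        have := psum_rec l m 1 t (Acoef1 a b d z)
          (Acoef1 (-(b - a*d)*s + a) (b/(1+d*s)) (d/(1+d*s)) z) 1 hA1
        rw [one_mul] at this
        exact this
      have R2 : (1 + d*s) * Psl3 l m' t' (-(b - a*d)*s + a) (b/(1+d*s)) (d/(1+d*s)) z 2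
          = Psl3 (l+1) m t a b d z 2 := by
        have := psum_rec l m 2 t (Acoef2 a b d z)
          (Acoef2 (-(b - a*d)*s + a) (b/(1+d*s)) (d/(1+d*s)) z) (1+d*s) hA2
        exact this
      have hP2' : 0 < Psl3 l m' t' (-(b - a*d)*s + a) (b/(1+d*s)) (d/(1+d*s)) z 2 := by
        rw [← R2] at h2
        by_contra hneg
        push_neg at hneg
        nlinarith
      have hP1' : 0 < Psl3 l m' t' (-(b - a*d)*s + a) (b/(1+d*s)) (d/(1+d*s)) z 1 := R1 ▸ h1
      rw [IH m' hm2 t' (-(b - a*d)*s + a) (b/(1+d*s)) (d/(1+d*s)) hg' hP1' hP2', ← R1, ← R2]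
      rw [Real.mul_rpow hpos.le hP2'.le]
      ring


/-- sl₃ kernel formula: for any word `m ∈ {0,1,2}^l`, on the domain where all prefactors
and `P¹`, `P²` are positive,
`T_{m_l}(t_l) ∘ ⋯ ∘ T_{m_1}(t_1) 1 = (P¹)^{μ₁}·(P²)^{μ₂}`. -/
theorem stmt12 (μ1 μ2 z : ℝ) (hz : z ≠ 0) (l : ℕ) (hl : 1 ≤ l)
    (m : Fin l → ℕ) (hm : ∀ a, m a ≤ 2)
    (t : Fin l → ℝ) (x11 x12 x22 : ℝ)
    (hgood : good3 z ((List.ofFn fun a : Fin l => (m a, t a)).reverse) (x11, x12, x22))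
    (hP1 : 0 < Psl3 l m t x11 x12 x22 z 1)
    (hP2 : 0 < Psl3 l m t x11 x12 x22 z 2) :
    comp3 μ1 μ2 z ((List.ofFn fun a : Fin l => (m a, t a)).reverse) (x11, x12, x22) =
      Psl3 l m t x11 x12 x22 z 1 ^ μ1 * Psl3 l m t x11 x12 x22 z 2 ^ μ2 := by
  exact main_ind μ1 μ2 z hz l m hm t x11 x12 x22 hgood hP1 hP2
end
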